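/- arXiv:1805.02192 — 8 statements merged into one kernel-verified Lean document; each statement's English description precedes it below -/
import Mathlib

section
/- Let G be a finite bipartite graph with parts A and B that has no isolated vertices, satisfies |A| ≤ |B|, and is well-spread with parameter λ = |A|/n where n = |A| + |B| (that is, |S|·|B| ≤ |N(S)|·|A| for every S ⊆ A, where N(S) ⊆ B is the neighborhood of S). Define the payoff p : A ∪ B → ℝ by p(a) = 1 − λ for a ∈ A and p(b) = λ for b ∈ B. Then p(u) + p(v) ≥ 1 for every edge uv of G, and for every independent set L ⊆ A ∪ B one has p(L) = ∑_{v∈L} p(v) ≤ n/4. -/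
/-- A well-spread bipartite graph with the (1-λ, λ) payoff satisfies all
edges and every independent set has payoff at most n/4. -/
theorem wellSpread_payoff {V : Type*} [Fintype V] [DecidableEq V]
    (G : SimpleGraph V) [DecidableRel G.Adj]
    (A B : Finset V) (hdisj : Disjoint A B) (hcover : A ∪ B = Finset.univ)
    (hbip : ∀ u v : V, G.Adj u v → (u ∈ A ∧ v ∈ B) ∨ (u ∈ B ∧ v ∈ A))
    (hiso : ∀ v : V, ∃ u : V, G.Adj u v)
    (hcard : A.card ≤ B.card)
    (hws : ∀ S ⊆ A, S.card * B.card ≤ (B.filter (fun b => ∃ a ∈ S, G.Adj a b)).card * A.card)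
    (n : ℕ) (hn : n = A.card + B.card)
    (lam : ℝ) (hlam : lam = (A.card : ℝ) / n)
    (p : V → ℝ) (hp : ∀ v : V, p v = if v ∈ A then 1 - lam else lam) :
    (∀ u v : V, G.Adj u v → 1 ≤ p u + p v) ∧
    (∀ L : Finset V, (∀ u ∈ L, ∀ v ∈ L, ¬ G.Adj u v) → ∑ v ∈ L, p v ≤ (n : ℝ) / 4) := by
  constructor
  · intro u v huv
    rcases hbip u v huv with ⟨hu, hv⟩ | ⟨hu, hv⟩
    · rw [hp u, hp v, if_pos hu, if_neg (Finset.disjoint_left.mp hdisj.symm hv)]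
      ring_nf; norm_num
    · rw [hp u, hp v, if_neg (Finset.disjoint_left.mp hdisj.symm hu), if_pos hv]
      ring_nf; norm_num
  · intro L hind
    set S := L ∩ A with hS
    set T := L ∩ B with hT
    set N := B.filter (fun b => ∃ a ∈ S, G.Adj a b) with hN
    have hLST : L = S ∪ T := by
      rw [hS, hT, ← Finset.inter_union_distrib_left, hcover, Finset.inter_univ]
    have hdST : Disjoint S T :=
      hdisj.mono Finset.inter_subset_right Finset.inter_subset_right
    -- sum computation
    have hsum : ∑ v ∈ L, p v = (S.card : ℝ) * (1 - lam) + (T.card : ℝ) * lam := by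
      rw [hLST, Finset.sum_union hdST]
      congr 1
      · rw [Finset.sum_congr rfl (fun v hv => by
          rw [hp v, if_pos (Finset.mem_inter.mp hv).2])]
        simp [mul_comm]; ring
      · rw [Finset.sum_congr rfl (fun v hv => by
          rw [hp v, if_neg (Finset.disjoint_left.mp hdisj.symm (Finset.mem_inter.mp hv).2)])]
        simp [mul_comm]
    -- T and N are disjoint subsets of B
    have hdTN : Disjoint T N := by
      rw [Finset.disjoint_left]
      intro b hb hbN
      obtain ⟨a, ha, hadj⟩ := (Finset.mem_filter.mp hbN).2
      exact hind a (Finset.mem_inter.mp ha).1 b (Finset.mem_inter.mp hb).1 hadj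
    have hTNB : T.card + N.card ≤ B.card := by
      rw [← Finset.card_union_of_disjoint hdTN]
      exact Finset.card_le_card (Finset.union_subset Finset.inter_subset_right
        (Finset.filter_subset _ _))
    have hws' := hws S Finset.inter_subset_right
    -- pass to reals
    have ha : (0:ℝ) ≤ (A.card : ℝ) := Nat.cast_nonneg _
    have hb : (0:ℝ) ≤ (B.card : ℝ) := Nat.cast_nonneg _
    have hws'' : (S.card : ℝ) * B.card ≤ (N.card : ℝ) * A.card := by
      exact_mod_cast hws'
    have hTNB' : (T.card : ℝ) + N.card ≤ B.card := by exact_mod_cast hTNB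
    have hncast : (n : ℝ) = (A.card : ℝ) + B.card := by rw [hn]; push_cast; ring
    rcases eq_or_lt_of_le (by positivity : (0:ℝ) ≤ (n:ℝ)) with h0 | hpos
    · -- n = 0 : A, B empty, L empty
      have hn0 : n = 0 := by exact_mod_cast h0.symm
      have hA0 : A.card = 0 := by omega
      have hB0 : B.card = 0 := by omega
      have hS0 : S.card = 0 := Nat.le_zero.mp (hA0 ▸ Finset.card_le_card Finset.inter_subset_right)
      have hT0 : T.card = 0 := Nat.le_zero.mp (hB0 ▸ Finset.card_le_card Finset.inter_subset_right)
      rw [hsum, hS0, hT0, ← h0]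
      norm_num
    · have hlam' : lam * n = A.card := by
        rw [hlam]; exact div_mul_cancel₀ _ (ne_of_gt hpos)
      have hS0 : (0:ℝ) ≤ (S.card : ℝ) := Nat.cast_nonneg _
      have hT0 : (0:ℝ) ≤ (T.card : ℝ) := Nat.cast_nonneg _
      have hN0 : (0:ℝ) ≤ (N.card : ℝ) := Nat.cast_nonneg _
      rw [hsum]
      
      nlinarith [mul_le_mul_of_nonneg_right hTNB' ha, hws'', mul_pos hpos hpos,
        sq_nonneg ((A.card:ℝ) - B.card), mul_nonneg ha hb, hlam', hncast,
        mul_le_mul_of_nonneg_right hws'' (le_of_lt hpos)]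
end

section
/- Let G be a finite bipartite graph with parts A and B of total order n = |A| + |B|, without isolated vertices, such that there exists a matching of G saturating A. Then there exists a payoff vector p : A ∪ B → ℝ with p ≥ 0, p(u) + p(v) ≥ 1 for every edge uv of G, p(a) ≥ 1/2 for every a ∈ A, and ∑_{v∈L} p(v) ≤ n/4 for every independent set L ⊆ A ∪ B. -/
open scoped Pointwise

set_option maxHeartbeats 1000000 in
/-- For a bipartite graph without isolated vertices in which A can be matched
into B, there is a feasible payoff with p ≥ 1/2 on A whose value on every independent set
is at most n/4. -/
theorem bipartite_payoff_exists {V : Type*} [Fintype V] [DecidableEq V]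
    (G : SimpleGraph V)
    (A B : Finset V) (hdisj : Disjoint A B) (hcover : A ∪ B = Finset.univ)
    (hbip : ∀ u v : V, G.Adj u v → (u ∈ A ∧ v ∈ B) ∨ (u ∈ B ∧ v ∈ A))
    (hiso : ∀ v : V, ∃ u : V, G.Adj u v)
    (hmatch : ∃ f : V → V, Set.InjOn f (A : Set V) ∧ ∀ a ∈ A, f a ∈ B ∧ G.Adj a (f a))
    (n : ℕ) (hn : n = A.card + B.card) :
    ∃ p : V → ℝ,
      (∀ v : V, 0 ≤ p v) ∧
      (∀ u v : V, G.Adj u v → 1 ≤ p u + p v) ∧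
      (∀ a ∈ A, (1 : ℝ) / 2 ≤ p a) ∧
      (∀ L : Finset V, (∀ u ∈ L, ∀ v ∈ L, ¬ G.Adj u v) → ∑ v ∈ L, p v ≤ (n : ℝ) / 4) := by
  classical
  obtain ⟨f, hfinj, hf⟩ := hmatch
  -- basic set facts
  have hBnotA : ∀ b ∈ B, b ∉ A := fun b hb => Finset.disjoint_right.mp hdisj hb
  have hAnotB : ∀ a ∈ A, a ∉ B := fun a ha => Finset.disjoint_left.mp hdisj ha
  have himg : A.image f ⊆ B := by
    intro b hb
    obtain ⟨a, ha, rfl⟩ := Finset.mem_image.mp hb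
    exact (hf a ha).1
  have hcardim : (A.image f).card = A.card := Finset.card_image_of_injOn hfinj
  have hcards : A.card ≤ B.card := by
    rw [← hcardim]; exact Finset.card_le_card himg
  have huniv : (Finset.univ : Finset V) = A ∪ B := hcover.symm
  -- real arithmetic helpers
  have keypair : ∀ x y M' : ℝ, 0 ≤ x → x ≤ M' → M' ≤ 1 → 0 ≤ y → y ≤ 1 - M' →
      x * max (1/2) (1-x) + y * min (1/2) M' ≤ 1/2 := by
    intro x y M' hx hxM hM1 hy hyM
    rcases le_total x (1/2) with h | h
    · have hmax : max (1/2:ℝ) (1-x) = 1 - x := max_eq_right (by linarith)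
      rw [hmax]
      have hmin0 : (0:ℝ) ≤ min (1/2) M' := le_min (by norm_num) (by linarith)
      have h2 : y * min (1/2) M' ≤ (1-M') * min (1/2) M' :=
        mul_le_mul_of_nonneg_right (by linarith) hmin0
      rcases le_total M' (1/2) with hM | hM
      · rw [min_eq_right hM] at h2 ⊢; nlinarith
      · rw [min_eq_left hM] at h2 ⊢; nlinarith
    · have hmax : max (1/2:ℝ) (1-x) = 1/2 := max_eq_left (by linarith)
      have hmin : min (1/2:ℝ) M' = 1/2 := min_eq_left (by linarith)
      rw [hmax, hmin]; nlinarith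
  have keysingle : ∀ y M' : ℝ, 0 ≤ M' → M' ≤ 1 → 0 ≤ y → y ≤ 1 - M' →
      y * min (1/2) M' ≤ 1/4 := by
    intro y M' hM0 hM1 hy hyM
    rcases le_total M' (1/2) with hM | hM
    · rw [min_eq_right hM]; nlinarith
    · rw [min_eq_left hM]; nlinarith
  -- the A-neighborhood of a B-vertex
  set NA : V → Finset V := fun b => A.filter (fun a => G.Adj a b) with hNA
  have hNAne : ∀ b ∈ B, (NA b).Nonempty := by
    intro b hb
    obtain ⟨u, hu⟩ := hiso b
    rcases hbip u b hu with ⟨huA, -⟩ | ⟨-, hbA⟩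
    · exact ⟨u, Finset.mem_filter.mpr ⟨huA, hu⟩⟩
    · exact absurd hbA (hBnotA b hb)
  -- Part I : for every w in the edge polytope there is a feasible payoff of value ≤ n/4
  have partI : ∀ w : V → ℝ, (∀ v, 0 ≤ w v) → (∀ v, w v ≤ 1) →
      (∀ u v : V, G.Adj u v → w u + w v ≤ 1) →
      ∃ p : V → ℝ, ((∀ v, 0 ≤ p v) ∧ (∀ v, p v ≤ 1) ∧
        (∀ u v : V, G.Adj u v → 1 ≤ p u + p v) ∧ (∀ a ∈ A, (1:ℝ)/2 ≤ p a)) ∧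
        ∑ v, w v * p v ≤ (n:ℝ)/4 := by
    intro w hw0 hw1 hwe
    set M : V → ℝ := fun b => if h : (NA b).Nonempty then (NA b).sup' h w else 0 with hM
    set p : V → ℝ := fun v => if v ∈ A then max (1/2) (1 - w v) else min (1/2) (M v) with hp
    have hMfact : ∀ b ∈ B, 0 ≤ M b ∧ M b ≤ 1 ∧ w b ≤ 1 - M b ∧
        ∀ a, a ∈ A → G.Adj a b → w a ≤ M b := by
      intro b hb
      have hne := hNAne b hb
      have hMb : M b = (NA b).sup' hne w := by simp [hM, dif_pos hne]
      obtain ⟨a0, ha0, ha0eq⟩ := Finset.exists_mem_eq_sup' hne w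
      have ha0' := Finset.mem_filter.mp ha0
      have hadj : G.Adj a0 b := ha0'.2
      have hwab : w a0 + w b ≤ 1 := hwe a0 b hadj
      constructor
      · rw [hMb, ha0eq]; exact hw0 a0
      constructor
      · rw [hMb, ha0eq]; exact hw1 a0
      constructor
      · rw [hMb, ha0eq]; linarith
      · intro a ha hadj'
        rw [hMb]
        have hmem : a ∈ NA b := by
          rw [hNA]; exact Finset.mem_filter.mpr ⟨ha, hadj'⟩
        exact Finset.le_sup' w hmem
    have hpB : ∀ b ∈ B, p b = min (1/2) (M b) := by
      intro b hb; simp [hp, hBnotA b hb]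
    have hpA : ∀ a ∈ A, p a = max (1/2) (1 - w a) := by
      intro a ha; simp [hp, ha]
    have hfeas : (∀ v, 0 ≤ p v) ∧ (∀ v, p v ≤ 1) ∧
        (∀ u v : V, G.Adj u v → 1 ≤ p u + p v) ∧ (∀ a ∈ A, (1:ℝ)/2 ≤ p a) := by
      have hmemAB : ∀ v : V, v ∈ A ∨ v ∈ B := by
        intro v
        have : v ∈ A ∪ B := by rw [hcover]; exact Finset.mem_univ v
        exact Finset.mem_union.mp this
      have hcov : ∀ a b : V, a ∈ A → b ∈ B → G.Adj a b → 1 ≤ p a + p b := by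
        intro a b ha hb hadj
        obtain ⟨hM0, hM1, hwb, hmax⟩ := hMfact b hb
        have hwa := hmax a ha hadj
        rw [hpA a ha, hpB b hb]
        rcases le_total (M b) (1/2) with hM | hM
        · rw [min_eq_right hM]
          have : (1:ℝ) - w a ≤ max (1/2) (1 - w a) := le_max_right _ _
          linarith
        · rw [min_eq_left hM]
          have : (1/2:ℝ) ≤ max (1/2) (1 - w a) := le_max_left _ _
          linarith
      refine ⟨?_, ?_, ?_, ?_⟩
      · intro v
        rcases hmemAB v with hv | hv
        · rw [hpA v hv]; have : (1/2:ℝ) ≤ max (1/2) (1 - w v) := le_max_left _ _; linarith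
        · rw [hpB v hv]
          obtain ⟨hM0, -, -, -⟩ := hMfact v hv
          exact le_min (by norm_num) hM0
      · intro v
        rcases hmemAB v with hv | hv
        · rw [hpA v hv]
          have := hw0 v
          apply max_le (by norm_num) (by linarith)
        · rw [hpB v hv]
          have : min (1/2:ℝ) (M v) ≤ 1/2 := min_le_left _ _
          linarith
      · intro u v hadj
        rcases hbip u v hadj with ⟨hu, hv⟩ | ⟨hu, hv⟩
        · exact hcov u v hu hv hadj
        · have := hcov v u hv hu hadj.symm
          linarith
      · intro a ha
        rw [hpA a ha]; exact le_max_left _ _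
    refine ⟨p, hfeas, ?_⟩
    -- the value bound
    have hsum : ∑ v, w v * p v
        = ∑ a ∈ A, (w a * p a + w (f a) * p (f a)) + ∑ b ∈ B \ A.image f, w b * p b := by
      rw [huniv, Finset.sum_union hdisj]
      have h1 : ∑ b ∈ B, w b * p b
          = ∑ b ∈ B \ A.image f, w b * p b + ∑ b ∈ A.image f, w b * p b :=
        (Finset.sum_sdiff himg).symm
      have h2 : ∑ b ∈ A.image f, w b * p b = ∑ a ∈ A, w (f a) * p (f a) :=
        Finset.sum_image (fun x hx y hy h => hfinj hx hy h)
      rw [h1, h2, Finset.sum_add_distrib]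
      ring
    rw [hsum]
    have hpairb : ∀ a ∈ A, w a * p a + w (f a) * p (f a) ≤ 1/2 := by
      intro a ha
      have hb : f a ∈ B := (hf a ha).1
      obtain ⟨hM0, hM1, hwb, hmax⟩ := hMfact (f a) hb
      have hwa : w a ≤ M (f a) := hmax a ha (hf a ha).2
      rw [hpA a ha, hpB (f a) hb]
      exact keypair (w a) (w (f a)) (M (f a)) (hw0 a) hwa hM1 (hw0 (f a)) hwb
    have hsingb : ∀ b ∈ B \ A.image f, w b * p b ≤ 1/4 := by
      intro b hb
      have hbB : b ∈ B := (Finset.mem_sdiff.mp hb).1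
      obtain ⟨hM0, hM1, hwb, -⟩ := hMfact b hbB
      rw [hpB b hbB]
      exact keysingle (w b) (M b) hM0 hM1 (hw0 b) hwb
    have h1 : ∑ a ∈ A, (w a * p a + w (f a) * p (f a)) ≤ (A.card : ℝ) * (1/2) := by
      calc ∑ a ∈ A, (w a * p a + w (f a) * p (f a)) ≤ ∑ _a ∈ A, (1/2:ℝ) :=
            Finset.sum_le_sum hpairb
        _ = (A.card : ℝ) * (1/2) := by rw [Finset.sum_const]; simp [mul_comm]
    have h2 : ∑ b ∈ B \ A.image f, w b * p b ≤ ((B.card : ℝ) - A.card) * (1/4) := by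
      have hcard : ((B \ A.image f).card : ℝ) = (B.card : ℝ) - A.card := by
        rw [Finset.card_sdiff_of_subset himg, hcardim, Nat.cast_sub hcards]
      calc ∑ b ∈ B \ A.image f, w b * p b ≤ ∑ _b ∈ B \ A.image f, (1/4:ℝ) :=
            Finset.sum_le_sum hsingb
        _ = ((B.card : ℝ) - A.card) * (1/4) := by
            rw [Finset.sum_const]; rw [← hcard]; simp [mul_comm]
    have hncast : (n : ℝ) = (A.card : ℝ) + B.card := by rw [hn]; push_cast; ring
    linarith
  -- Part II : separation / minimax argument
  set Indep : Finset V → Prop := fun L => ∀ u ∈ L, ∀ v ∈ L, ¬ G.Adj u v with hIndepDef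
  set P : Set (V → ℝ) := {p | (∀ v, 0 ≤ p v) ∧ (∀ v, p v ≤ 1) ∧
      (∀ u v : V, G.Adj u v → 1 ≤ p u + p v) ∧ (∀ a ∈ A, (1:ℝ)/2 ≤ p a)} with hPdef
  set Phi : (V → ℝ) → (Finset V → ℝ) :=
      fun p L => if Indep L then ∑ v ∈ L, p v else 0 with hPhiDef
  set O : Set (Finset V → ℝ) := {z | ∀ L, 0 ≤ z L} with hOdef
  set c : Finset V → ℝ := fun _ => (n:ℝ)/4 with hcdef
  suffices hcK : c ∈ (Phi '' P) + O by
    obtain ⟨y, hy, z, hz, hyz⟩ := Set.mem_add.mp hcK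
    obtain ⟨p, hpP, rfl⟩ := hy
    obtain ⟨hp0, hp1, hpcov, hpA⟩ := hpP
    refine ⟨p, hp0, hpcov, hpA, ?_⟩
    intro L hL
    have hLval := congrFun hyz L
    have hPhiL : Phi p L = ∑ v ∈ L, p v := by
      show (if Indep L then ∑ v ∈ L, p v else 0) = ∑ v ∈ L, p v
      exact if_pos hL
    have hzL := hz L
    simp only [Pi.add_apply] at hLval
    rw [hPhiL] at hLval
    have : c L = (n:ℝ)/4 := rfl
    linarith [hLval, this]
  by_contra hcK
  -- topological and convexity facts
  have hPconv : Convex ℝ P := by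
    intro p hp q hq a b ha hb hab
    obtain ⟨hp0, hp1, hpc, hpA⟩ := hp
    obtain ⟨hq0, hq1, hqc, hqA⟩ := hq
    refine ⟨?_, ?_, ?_, ?_⟩
    · intro v
      have := hp0 v; have := hq0 v
      simp only [Pi.add_apply, Pi.smul_apply, smul_eq_mul]
      nlinarith
    · intro v
      have := hp1 v; have := hq1 v
      simp only [Pi.add_apply, Pi.smul_apply, smul_eq_mul]
      nlinarith
    · intro u v hadj
      have h1 := hpc u v hadj; have h2 := hqc u v hadj
      simp only [Pi.add_apply, Pi.smul_apply, smul_eq_mul]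
      nlinarith
    · intro x hx
      have h1 := hpA x hx; have h2 := hqA x hx
      simp only [Pi.add_apply, Pi.smul_apply, smul_eq_mul]
      nlinarith
  have hPclosed : IsClosed P := by
    have : P = (⋂ v : V, {p : V → ℝ | 0 ≤ p v}) ∩ ((⋂ v : V, {p : V → ℝ | p v ≤ 1}) ∩
        ((⋂ u : V, ⋂ v : V, {p : V → ℝ | G.Adj u v → 1 ≤ p u + p v}) ∩
         (⋂ a : V, {p : V → ℝ | a ∈ A → (1:ℝ)/2 ≤ p a}))) := by
      ext p
      simp only [hPdef, Set.mem_setOf_eq, Set.mem_inter_iff, Set.mem_iInter]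
      try tauto
    rw [this]
    refine IsClosed.inter ?_ (IsClosed.inter ?_ (IsClosed.inter ?_ ?_))
    · exact isClosed_iInter fun v => isClosed_le continuous_const (continuous_apply v)
    · exact isClosed_iInter fun v => isClosed_le (continuous_apply v) continuous_const
    · refine isClosed_iInter fun u => isClosed_iInter fun v => ?_
      by_cases h : G.Adj u v
      · simp only [h, forall_true_left]
        exact isClosed_le continuous_const ((continuous_apply u).add (continuous_apply v))
      · simp only [h, IsEmpty.forall_iff]  -- {p | False → _} = univ
        exact isClosed_univ
    · refine isClosed_iInter fun a => ?_
      by_cases h : a ∈ A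
      · simp only [h, forall_true_left]
        exact isClosed_le continuous_const (continuous_apply a)
      · simp only [h, IsEmpty.forall_iff]
        exact isClosed_univ
  have hPcomp : IsCompact P := by
    have hsub : P ⊆ Set.pi Set.univ (fun _ : V => Set.Icc (0:ℝ) 1) := by
      intro p hp v _
      exact ⟨hp.1 v, hp.2.1 v⟩
    have hbox : IsCompact (Set.pi Set.univ (fun _ : V => Set.Icc (0:ℝ) 1)) :=
      isCompact_univ_pi (fun _ : V => isCompact_Icc)
    exact IsCompact.of_isClosed_subset hbox hPclosed hsub
  have hp0P : (fun _ : V => (1:ℝ)) ∈ P := by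
    refine ⟨fun v => by norm_num, fun v => le_refl 1, fun u v _ => by norm_num,
      fun a _ => by norm_num⟩
  have hPhicont : Continuous Phi := by
    apply continuous_pi
    intro L
    by_cases h : Indep L
    · simp only [hPhiDef, if_pos h]
      exact continuous_finset_sum L (fun v _ => continuous_apply v)
    · simp only [hPhiDef, if_neg h]
      exact continuous_const
  have hImgConv : Convex ℝ (Phi '' P) := by
    rintro y ⟨p, hp, rfl⟩ z ⟨q, hq, rfl⟩ a b ha hb hab
    refine ⟨a • p + b • q, hPconv hp hq ha hb hab, ?_⟩
    funext L
    simp only [hPhiDef, Pi.add_apply, Pi.smul_apply, smul_eq_mul]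
    by_cases h : Indep L
    · simp only [if_pos h]
      rw [Finset.mul_sum, Finset.mul_sum, ← Finset.sum_add_distrib]
      try exact Finset.sum_congr rfl fun v _ => by simp [smul_eq_mul]
    · simp [if_neg h]
  have hOconv : Convex ℝ O := by
    intro y hy z hz a b ha hb hab L
    simp only [Pi.add_apply, Pi.smul_apply, smul_eq_mul]
    have := hy L; have := hz L
    nlinarith
  have hOclosed : IsClosed O := by
    have : O = ⋂ L : Finset V, {z : Finset V → ℝ | 0 ≤ z L} := by
      ext z; simp [hOdef, Set.mem_iInter]
    rw [this]
    exact isClosed_iInter fun L => isClosed_le continuous_const (continuous_apply L)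
  have hKconv : Convex ℝ ((Phi '' P) + O) := hImgConv.add hOconv
  have hKclosed : IsClosed ((Phi '' P) + O) :=
    hOclosed.add_left_of_isCompact (hPcomp.image hPhicont)
  obtain ⟨g, u, hgc, hgK⟩ := geometric_hahn_banach_point_closed hKconv hKclosed hcK
  set lam : Finset V → ℝ := fun L => g (Pi.single L 1) with hlamdef
  have hsingle : ∀ y : Finset V → ℝ, ∀ L, Pi.single L (y L) = y L • (Pi.single L 1 : Finset V → ℝ) := by
    intro y L
    funext K
    by_cases h : K = L
    · subst h; simp
    · simp [Pi.single_apply, h]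
  have hg : ∀ y : Finset V → ℝ, g y = ∑ L, y L * lam L := by
    intro y
    conv_lhs => rw [← Finset.univ_sum_single y]
    rw [map_sum]
    refine Finset.sum_congr rfl fun L _ => ?_
    rw [hsingle y L, map_smul, smul_eq_mul, hlamdef]
  have hmemK : ∀ p ∈ P, ∀ z ∈ O, Phi p + z ∈ (Phi '' P) + O := by
    intro p hp z hz
    exact Set.add_mem_add ⟨p, hp, rfl⟩ hz
  have hzero : (fun _ : Finset V => (0:ℝ)) ∈ O := fun L => le_refl 0
  have hlam : ∀ L, 0 ≤ lam L := by
    intro L0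
    by_contra hneg
    push_neg at hneg
    have hmem : ∀ t : ℝ, 0 ≤ t → Phi (fun _ => (1:ℝ)) + t • (Pi.single L0 1 : Finset V → ℝ) ∈ (Phi '' P) + O := by
      intro t ht
      apply hmemK _ hp0P
      intro L
      by_cases h : L = L0
      · subst h; simp [Pi.single_apply, ht]
      · simp [Pi.single_apply, h]
    have hbase : u < g (Phi (fun _ => (1:ℝ))) := by
      have := hgK _ (hmem 0 le_rfl)
      simpa using this
    set t0 : ℝ := (g (Phi (fun _ => (1:ℝ))) - u + 1) / (-lam L0) with ht0def
    have ht0 : 0 ≤ t0 := div_nonneg (by linarith) (by linarith)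
    have hval := hgK _ (hmem t0 ht0)
    rw [map_add, map_smul, smul_eq_mul] at hval
    have hgsingle : g (Pi.single L0 1) = lam L0 := rfl
    rw [hgsingle] at hval
    have ht0eq : t0 * lam L0 = -(g (Phi (fun _ => (1:ℝ))) - u + 1) := by
      have hne : -lam L0 ≠ 0 := ne_of_gt (by linarith)
      have hrw : t0 * lam L0 = -(t0 * (-lam L0)) := by ring
      rw [hrw, ht0def, div_mul_cancel₀ _ hne]
    rw [ht0eq] at hval
    linarith
  set I : Finset (Finset V) := Finset.univ.filter Indep with hIdef
  set Lam : ℝ := ∑ L ∈ I, lam L with hLamdef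
  have hLam0 : 0 ≤ Lam := Finset.sum_nonneg fun L _ => hlam L
  set W : V → ℝ := fun v => ∑ L ∈ I, (if v ∈ L then lam L else 0) with hWdef
  have hgPhi : ∀ p : V → ℝ, g (Phi p) = ∑ v, W v * p v := by
    intro p
    rw [hg]
    have hstep : ∀ L : Finset V, Phi p L * lam L
        = ∑ v, (if v ∈ L then lam L else 0) * p v * (if Indep L then 1 else 0) := by
      intro L
      by_cases h : Indep L
      · simp only [hPhiDef, if_pos h, mul_one]
        rw [Finset.sum_mul]
        have : ∀ v, (if v ∈ L then lam L else 0) * p v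
            = if v ∈ L then p v * lam L else 0 := by
          intro v; by_cases hv : v ∈ L <;> simp [hv, mul_comm]
        rw [Finset.sum_congr rfl (fun v _ => this v)]
        rw [Finset.sum_ite_mem, Finset.univ_inter]
      · simp only [hPhiDef, if_neg h, zero_mul]
        symm
        refine Finset.sum_eq_zero fun v _ => ?_
        rw [mul_zero]
    calc ∑ L, Phi p L * lam L
        = ∑ L, ∑ v, (if v ∈ L then lam L else 0) * p v * (if Indep L then 1 else 0) :=
          Finset.sum_congr rfl fun L _ => hstep L
      _ = ∑ v, ∑ L, (if v ∈ L then lam L else 0) * p v * (if Indep L then 1 else 0) :=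
          Finset.sum_comm
      _ = ∑ v, W v * p v := by
          refine Finset.sum_congr rfl fun v _ => ?_
          have hWv : W v * p v = ∑ L ∈ I, (if v ∈ L then lam L else 0) * p v := by
            rw [hWdef]
            exact Finset.sum_mul _ _ _
          rw [hWv, hIdef, Finset.sum_filter]
          refine Finset.sum_congr rfl fun L _ => ?_
          by_cases h : Indep L
          · rw [if_pos h, if_pos h, mul_one]
          · rw [if_neg h, if_neg h, mul_zero]
  have hW0 : ∀ v, 0 ≤ W v := by
    intro v
    exact Finset.sum_nonneg fun L _ => by by_cases h : v ∈ L <;> simp [h, hlam L]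
  have hWle : ∀ v, W v ≤ Lam := by
    intro v
    exact Finset.sum_le_sum fun L _ => by by_cases h : v ∈ L <;> simp [h, hlam L]
  have hWedge : ∀ u' v' : V, G.Adj u' v' → W u' + W v' ≤ Lam := by
    intro u' v' hadj
    rw [hWdef, hLamdef]
    simp only
    rw [← Finset.sum_add_distrib]
    refine Finset.sum_le_sum fun L hL => ?_
    have hLI : Indep L := (Finset.mem_filter.mp hL).2
    by_cases h1 : u' ∈ L
    · by_cases h2 : v' ∈ L
      · exact absurd hadj (hLI u' h1 v' h2)
      · simp [h1, h2]
    · by_cases h2 : v' ∈ L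
      · simp [h1, h2]
      · simp [h1, h2, hlam L]
  have hgc' : g c = (n:ℝ)/4 * ∑ L, lam L := by
    rw [hg]
    rw [Finset.mul_sum]
  have hLamle : Lam ≤ ∑ L, lam L := by
    rw [hLamdef, hIdef]
    exact Finset.sum_le_sum_of_subset_of_nonneg (Finset.filter_subset _ _)
      (fun L _ _ => hlam L)
  have hsumlam0 : 0 ≤ ∑ L, lam L := Finset.sum_nonneg fun L _ => hlam L
  have hn4 : (0:ℝ) ≤ (n:ℝ)/4 := by positivity
  rcases eq_or_lt_of_le hLam0 with hLz | hLpos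
  · -- Lam = 0 : all lambda on independent sets vanish
    have hallz : ∀ L ∈ I, lam L = 0 := by
      intro L hL
      have := (Finset.sum_eq_zero_iff_of_nonneg (fun L _ => hlam L)).mp hLz.symm
      exact this L hL
    have hWz : ∀ v, W v = 0 := by
      intro v
      refine Finset.sum_eq_zero fun L hL => ?_
      by_cases h : v ∈ L <;> simp [h, hallz L hL]
    have hgp0 : g (Phi (fun _ => (1:ℝ))) = 0 := by
      rw [hgPhi]
      refine Finset.sum_eq_zero fun v _ => by rw [hWz v]; ring
    have hmem0 : Phi (fun _ => (1:ℝ)) ∈ (Phi '' P) + O := by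
      have h := hmemK _ hp0P _ hzero
      have heq : Phi (fun _ => (1:ℝ)) + (fun _ : Finset V => (0:ℝ)) = Phi (fun _ => (1:ℝ)) := by
        funext K; simp
      rwa [heq] at h
    have := hgK _ hmem0
    rw [hgp0] at this
    have hgc0 : 0 ≤ g c := by
      rw [hgc']
      exact mul_nonneg hn4 hsumlam0
    linarith
  · -- Lam > 0 : normalize and apply part I
    set w : V → ℝ := fun v => W v / Lam with hwdef
    have hw0 : ∀ v, 0 ≤ w v := fun v => div_nonneg (hW0 v) (le_of_lt hLpos)
    have hw1 : ∀ v, w v ≤ 1 := by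
      intro v
      rw [hwdef]
      simp only
      rw [div_le_one hLpos]
      exact hWle v
    have hwe : ∀ u' v' : V, G.Adj u' v' → w u' + w v' ≤ 1 := by
      intro u' v' hadj
      rw [hwdef]
      simp only
      rw [← add_div, div_le_one hLpos]
      exact hWedge u' v' hadj
    obtain ⟨phat, hphatP, hphatval⟩ := partI w hw0 hw1 hwe
    have hphatmem : Phi phat ∈ (Phi '' P) + O := by
      have h := hmemK phat hphatP _ hzero
      have heq : Phi phat + (fun _ : Finset V => (0:ℝ)) = Phi phat := by
        funext K; simp
      rwa [heq] at h
    have h1 := hgK _ hphatmem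
    have h2 : g (Phi phat) = Lam * ∑ v, w v * phat v := by
      rw [hgPhi, Finset.mul_sum]
      refine Finset.sum_congr rfl fun v _ => ?_
      rw [hwdef]
      simp only
      field_simp
      try ring
    have h3 : g (Phi phat) ≤ Lam * ((n:ℝ)/4) := by
      rw [h2]
      exact mul_le_mul_of_nonneg_left hphatval (le_of_lt hLpos)
    have h4 : Lam * ((n:ℝ)/4) ≤ (n:ℝ)/4 * ∑ L, lam L := by
      rw [mul_comm]
      exact mul_le_mul_of_nonneg_left hLamle hn4
    rw [← hgc'] at h4
    linarith
end

section
/- Let G = (V, E) be any finite simple graph on n = |V| vertices. Then there exists a payoff vector p : V → ℝ with p ≥ 0 and p(u) + p(v) ≥ 1 for every edge uv ∈ E, such that ∑_{v∈L} p(v) ≤ n/4 for every independent set L ⊆ V. (In other words, the critical threshold value of the graphic simple game on G satisfies α_G ≤ n/4.) -/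
/-- For every finite simple graph G on n vertices there is a feasible payoff
whose value on every independent set is at most n/4, i.e. α_G ≤ n/4. -/
theorem graphic_alpha_le_quarter {V : Type*} [Fintype V] (G : SimpleGraph V) :
    ∃ p : V → ℝ,
      (∀ v : V, 0 ≤ p v) ∧
      (∀ u v : V, G.Adj u v → 1 ≤ p u + p v) ∧
      (∀ L : Finset V, (∀ u ∈ L, ∀ v ∈ L, ¬ G.Adj u v) →
        ∑ v ∈ L, p v ≤ (Fintype.card V : ℝ) / 4) := by
  classical
  -- The convex compact set of "fractional independent sets"
  set K : Set (V → ℝ) :=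
    {x | (∀ v, x v ∈ Set.Icc (0:ℝ) 1) ∧ ∀ u v, G.Adj u v → x u + x v ≤ 1} with hKdef
  have hK0 : (fun _ => (0:ℝ)) ∈ K := by
    constructor
    · intro v; exact ⟨le_refl 0, zero_le_one⟩
    · intro u v _; norm_num
  have hKne : K.Nonempty := ⟨_, hK0⟩
  have hKcl : IsClosed K := by
    have h1 : IsClosed {x : V → ℝ | ∀ v, x v ∈ Set.Icc (0:ℝ) 1} := by
      rw [Set.setOf_forall]
      exact isClosed_iInter fun v => isClosed_Icc.preimage (continuous_apply v)
    have h2 : IsClosed {x : V → ℝ | ∀ u v, G.Adj u v → x u + x v ≤ 1} := by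
      rw [Set.setOf_forall]
      refine isClosed_iInter fun u => ?_
      rw [Set.setOf_forall]
      refine isClosed_iInter fun v => ?_
      rw [Set.setOf_forall]
      exact isClosed_iInter fun _ =>
        isClosed_le ((continuous_apply u).add (continuous_apply v)) continuous_const
    exact h1.inter h2
  have hKcompact : IsCompact K := by
    refine IsCompact.of_isClosed_subset
      (isCompact_univ_pi fun _ : V => (isCompact_Icc : IsCompact (Set.Icc (0:ℝ) 1))) hKcl ?_
    intro x hx
    exact Set.mem_univ_pi.2 fun v => hx.1 v
  -- the concave quadratic functional
  set φ : (V → ℝ) → ℝ := fun x => ∑ v, (x v - (x v)^2/2) with hφdef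
  have hφc : Continuous φ := by
    apply continuous_finset_sum
    intro v _
    exact (continuous_apply v).sub (((continuous_apply v).pow 2).div_const 2)
  obtain ⟨a, haK, ha⟩ := hKcompact.exists_isMaxOn hKne hφc.continuousOn
  -- the first-order optimality condition
  have hkey : ∀ x ∈ K, ∑ v, (1 - a v) * x v ≤ ∑ v, (1 - a v) * a v := by
    intro x hx
    by_contra hcon
    push_neg at hcon
    set d : V → ℝ := fun v => x v - a v with hddef
    set c : ℝ := ∑ v, (1 - a v) * d v with hcdef
    have hc : 0 < c := by
      have hce : c = ∑ v, (1 - a v) * x v - ∑ v, (1 - a v) * a v := by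
        rw [hcdef, ← Finset.sum_sub_distrib]
        exact Finset.sum_congr rfl fun v _ => by simp only [hddef]; ring
      rw [hce]; linarith
    set S : ℝ := ∑ v, (d v)^2 with hSdef
    have hS : 0 ≤ S := Finset.sum_nonneg fun v _ => sq_nonneg _
    set θ : ℝ := min 1 (c / (S + 1)) with hθdef
    have hθ0 : 0 < θ := lt_min one_pos (div_pos hc (by positivity))
    have hθ1 : θ ≤ 1 := min_le_left _ _
    have hzK : (fun v => a v + θ * d v) ∈ K := by
      constructor
      · intro v
        obtain ⟨h1a, h1b⟩ := hx.1 v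
        obtain ⟨h2a, h2b⟩ := haK.1 v
        constructor
        · have e1 : 0 ≤ θ * x v := mul_nonneg hθ0.le h1a
          have e2 : 0 ≤ (1 - θ) * a v := mul_nonneg (by linarith) h2a
          simp only [hddef]; nlinarith
        · have e1 : 0 ≤ θ * (1 - x v) := mul_nonneg hθ0.le (by linarith)
          have e2 : 0 ≤ (1 - θ) * (1 - a v) := mul_nonneg (by linarith) (by linarith)
          simp only [hddef]; nlinarith
      · intro u v huv
        have h1 := hx.2 u v huv
        have h2 := haK.2 u v huv
        have e1 : 0 ≤ θ * (1 - (x u + x v)) := mul_nonneg hθ0.le (by linarith)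
        have e2 : 0 ≤ (1 - θ) * (1 - (a u + a v)) := mul_nonneg (by linarith) (by linarith)
        simp only [hddef]; nlinarith
    have hφz : φ (fun v => a v + θ * d v) ≤ φ a := isMaxOn_iff.mp ha _ hzK
    have hexp : φ (fun v => a v + θ * d v) = φ a + (θ * c - θ^2/2 * S) := by
      have hpt : ∀ v : V, (a v + θ * d v) - (a v + θ * d v)^2/2
          = (a v - (a v)^2/2) + (θ * ((1 - a v) * d v) - θ^2/2 * ((d v)^2)) := by
        intro v; ring
      calc φ (fun v => a v + θ * d v)
          = ∑ v, ((a v - (a v)^2/2) + (θ * ((1 - a v) * d v) - θ^2/2 * ((d v)^2))) :=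
            Finset.sum_congr rfl fun v _ => hpt v
        _ = φ a + (θ * c - θ^2/2 * S) := by
            simp only [hφdef, hcdef, hSdef, Finset.mul_sum, Finset.sum_add_distrib,
              Finset.sum_sub_distrib]
    rw [hexp] at hφz
    have hcle : c ≤ θ/2 * S := by nlinarith
    have hθ2 : θ * (S + 1) ≤ c := by
      have := min_le_right (1:ℝ) (c / (S + 1))
      calc θ * (S + 1) ≤ (c / (S + 1)) * (S + 1) := by
            apply mul_le_mul_of_nonneg_right _ (by positivity)
            exact min_le_right _ _
        _ = c := by field_simp
    have hθS : 0 ≤ θ * S := mul_nonneg hθ0.le hS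
    linarith
  -- the payoff
  refine ⟨fun v => 1 - a v, ?_, ?_, ?_⟩
  · intro v
    have := (haK.1 v).2
    simp only
    linarith
  · intro u v huv
    have := haK.2 u v huv
    simp only
    linarith
  · intro L hL
    have hχ : (fun v => if v ∈ L then (1:ℝ) else 0) ∈ K := by
      constructor
      · intro v
        by_cases h : v ∈ L <;> simp [h]
      · intro u v huv
        by_cases hu : u ∈ L
        · by_cases hv : v ∈ L
          · exact absurd huv (hL u hu v hv)
          · simp [hu, hv]
        · by_cases hv : v ∈ L <;> simp [hu, hv]
    have h1 := hkey _ hχ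
    have h2 : ∑ v ∈ L, (1 - a v) = ∑ v : V, (1 - a v) * (if v ∈ L then (1:ℝ) else 0) := by
      simp only [mul_ite, mul_one, mul_zero]
      rw [Finset.sum_ite_mem, Finset.univ_inter]
    have h3 : ∑ v : V, (1 - a v) * a v ≤ (Fintype.card V : ℝ) / 4 := by
      calc ∑ v : V, (1 - a v) * a v ≤ ∑ _v : V, (1/4 : ℝ) :=
            Finset.sum_le_sum fun v _ => by nlinarith [sq_nonneg (a v - 1/2)]
        _ = (Fintype.card V : ℝ) / 4 := by
            rw [Finset.sum_const, Finset.card_univ, nsmul_eq_mul]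
            ring
    simp only
    rw [h2]
    exact h1.trans h3
end

section
/- Let (N, v) be a simple game on n players in which no minimal winning coalition has size exactly 3. Then there exists a payoff vector p : N → ℝ with p ≥ 0 such that p(W) = ∑_{i∈W} p_i ≥ 1 for every winning coalition W and p(L) = ∑_{i∈L} p_i ≤ n/4 for every losing coalition L. (Hence the critical threshold value satisfies α(N, v) ≤ n/4.) -/
open Finset

set_option linter.unusedSectionVars false
set_option maxHeartbeats 1000000

section FarkasFull

variable {d : ℕ} {J : Type*} [Fintype J] [DecidableEq J]

variable {d : ℕ} {J : Type*} [Fintype J] [DecidableEq J]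

/-- the cone generated by the vectors `vec j`, `j ∈ T`. -/
private def coneOf (vec : J → (Fin d → ℝ) × ℝ) (T : Finset J) : Set ((Fin d → ℝ) × ℝ) :=
  {x | ∃ c : J → ℝ, (∀ j, 0 ≤ c j) ∧ x = ∑ j ∈ T, c j • vec j}

private lemma sum_subtype_eq {M : Type*} [AddCommMonoid M] (T : Finset J) (f : J → M) :
    ∑ j : {j // j ∈ T}, f ↑j = ∑ j ∈ T, f j := by
  rw [Finset.univ_eq_attach, Finset.sum_attach]

/-- core exchange step -/
private lemma cone_erase (vec : J → (Fin d → ℝ) × ℝ) (T : Finset J) (G : J → ℝ)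
    (hG0 : ∀ j, j ∉ T → G j = 0) (hGsum : ∑ j ∈ T, G j • vec j = 0)
    (j0 : J) (hj0T : j0 ∈ T) (hj0 : 0 < G j0)
    (x : (Fin d → ℝ) × ℝ) (hx : x ∈ coneOf vec T) :
    ∃ j2 ∈ T, x ∈ coneOf vec (T.erase j2) := by
  obtain ⟨c, hc0, hcx⟩ := hx
  have hPne : (T.filter (fun j => 0 < G j)).Nonempty := ⟨j0, by simp [hj0T, hj0]⟩
  obtain ⟨j2, hj2P, hmin⟩ := Finset.exists_min_image _ (fun j => c j / G j) hPne
  rw [Finset.mem_filter] at hj2P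
  obtain ⟨hj2T, hG2⟩ := hj2P
  set t := c j2 / G j2 with ht
  have ht0 : 0 ≤ t := div_nonneg (hc0 j2) hG2.le
  have hc' : ∀ j, 0 ≤ c j - t * G j := by
    intro j
    by_cases hjT : j ∈ T
    · rcases le_or_gt (G j) 0 with h | h
      · nlinarith [hc0 j]
      · have := hmin j (Finset.mem_filter.mpr ⟨hjT, h⟩)
        rw [le_div_iff₀ h] at this
        linarith
    · rw [hG0 j hjT]; simpa using hc0 j
  refine ⟨j2, hj2T, ⟨fun j => c j - t * G j, hc', ?_⟩⟩
  have hzero : (c j2 - t * G j2) • vec j2 = 0 := by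
    rw [ht, div_mul_cancel₀ _ (ne_of_gt hG2)]
    simp
  have herase := Finset.sum_erase (f := fun j => (c j - t * G j) • vec j) T hzero
  rw [herase]
  have : ∑ j ∈ T, (c j - t * G j) • vec j
      = (∑ j ∈ T, c j • vec j) - t • (∑ j ∈ T, G j • vec j) := by
    rw [Finset.smul_sum, ← Finset.sum_sub_distrib]
    congr 1; funext j; rw [sub_smul, smul_smul]
  rw [this, hGsum, smul_zero, sub_zero, hcx]

/-- conic Carathéodory -/
private lemma cone_caratheodory (vec : J → (Fin d → ℝ) × ℝ) :
    ∀ T : Finset J, ∀ x ∈ coneOf vec T, ∃ T' ⊆ T,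
      (LinearIndependent ℝ (fun j : {j // j ∈ T'} => vec j)) ∧ x ∈ coneOf vec T' := by
  intro T
  induction T using Finset.strongInductionOn with
  | _ T ih =>
    intro x hx
    by_cases hind : LinearIndependent ℝ (fun j : {j // j ∈ T} => vec j)
    · exact ⟨T, Finset.Subset.refl T, hind, hx⟩
    · obtain ⟨g, hgsum, j1, hgne⟩ := Fintype.not_linearIndependent_iff.mp hind
      set G : J → ℝ := fun j => if h : j ∈ T then g ⟨j, h⟩ else 0 with hGdef
      have hG0 : ∀ j, j ∉ T → G j = 0 := fun j hj => by simp [hGdef, hj]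
      have hGsum : ∑ j ∈ T, G j • vec j = 0 := by
        rw [← sum_subtype_eq T (fun j => G j • vec j), ← hgsum]
        apply Finset.sum_congr rfl
        intro j _
        simp [hGdef, j.2]
      have hGne : G (↑j1) ≠ 0 := by simpa [hGdef, j1.2] using hgne
      have key : ∃ j2 ∈ T, x ∈ coneOf vec (T.erase j2) := by
        rcases lt_or_gt_of_ne hGne with hneg | hpos
        · have h1 : ∀ j, j ∉ T → (-G) j = 0 := fun j hj => by simp [hG0 j hj]
          have h2 : ∑ j ∈ T, (-G) j • vec j = 0 := by
            have : ∑ j ∈ T, (-G) j • vec j = -∑ j ∈ T, G j • vec j := by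
              rw [← Finset.sum_neg_distrib]
              exact Finset.sum_congr rfl fun j _ => by simp [neg_smul]
            rw [this, hGsum, neg_zero]
          have h3 : 0 < (-G) (↑j1) := by simpa using hneg
          exact cone_erase vec T (-G) h1 h2 (↑j1) j1.2 h3 x hx
        · exact cone_erase vec T G hG0 hGsum (↑j1) j1.2 hpos x hx
      obtain ⟨j2, hj2T, hx2⟩ := key
      obtain ⟨T', hT'sub, hT'ind, hxT'⟩ := ih (T.erase j2) (Finset.erase_ssubset hj2T) x hx2
      exact ⟨T', hT'sub.trans (Finset.erase_subset _ _), hT'ind, hxT'⟩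

private lemma isClosed_coneOf_indep (vec : J → (Fin d → ℝ) × ℝ) (T : Finset J)
    (h : LinearIndependent ℝ (fun j : {j // j ∈ T} => vec j)) :
    IsClosed (coneOf vec T) := by
  classical
  set L : ({j // j ∈ T} → ℝ) →ₗ[ℝ] ((Fin d → ℝ) × ℝ) :=
    { toFun := fun c => ∑ j : {j // j ∈ T}, c j • vec ↑j
      map_add' := by
        intro c₁ c₂
        simp [add_smul, Finset.sum_add_distrib]
      map_smul' := by
        intro r c
        simp [smul_smul, Finset.smul_sum] } with hL
  have hLapp : ∀ c, L c = ∑ j : {j // j ∈ T}, c j • vec ↑j := fun c => rfl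
  have hinj : Function.Injective L := by
    intro c₁ c₂ hcc
    have hker : L (c₁ - c₂) = 0 := by
      rw [map_sub, hcc, sub_self]
    have := Fintype.linearIndependent_iff.mp h (c₁ - c₂) (by
      rw [← hLapp]; exact hker)
    funext j
    have := this j
    simpa [sub_eq_zero] using this
  obtain ⟨K, hKpos, hanti⟩ := L.exists_antilipschitzWith (LinearMap.ker_eq_bot.mpr hinj)
  have hucont : UniformContinuous L := L.toContinuousLinearMap.uniformContinuous
  have hemb := hanti.isClosedEmbedding hucont
  have hset : coneOf vec T = L '' {c : {j // j ∈ T} → ℝ | ∀ j, 0 ≤ c j} := by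
    ext x
    constructor
    · rintro ⟨c, hc0, rfl⟩
      refine ⟨fun j => c ↑j, fun j => hc0 _, ?_⟩
      rw [hLapp, sum_subtype_eq T (fun j => c j • vec j)]
    · rintro ⟨cf, hcf0, rfl⟩
      refine ⟨fun j => if hj : j ∈ T then cf ⟨j, hj⟩ else 0, ?_, ?_⟩
      · intro j
        by_cases hj : j ∈ T
        · simpa [hj] using hcf0 ⟨j, hj⟩
        · simp [hj]
      · rw [hLapp]
        rw [← sum_subtype_eq T (fun j => (if hj : j ∈ T then cf ⟨j, hj⟩ else 0) • vec j)]
        apply Finset.sum_congr rfl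
        intro j _
        simp [j.2]
  rw [hset]
  apply hemb.isClosedMap
  have : {c : {j // j ∈ T} → ℝ | ∀ j, 0 ≤ c j} = ⋂ j, (fun c : {j // j ∈ T} → ℝ => c j) ⁻¹' Set.Ici 0 := by
    ext c; simp [Set.mem_iInter]
  rw [this]
  exact isClosed_iInter fun j => isClosed_Ici.preimage (continuous_apply j)

private lemma coneOf_subset_univ (vec : J → (Fin d → ℝ) × ℝ) (T : Finset J) :
    coneOf vec T ⊆ coneOf vec (univ : Finset J) := by
  rintro x ⟨c, hc0, rfl⟩
  refine ⟨fun j => if j ∈ T then c j else 0, fun j => by by_cases hj : j ∈ T <;> simp [hj, hc0], ?_⟩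
  have h1 : ∀ j, ((if j ∈ T then c j else 0) • vec j) = (if j ∈ T then c j • vec j else 0) :=
    fun j => by split <;> simp
  calc ∑ j ∈ T, c j • vec j = ∑ j ∈ univ ∩ T, c j • vec j := by rw [Finset.univ_inter]
  _ = ∑ j : J, (if j ∈ T then c j • vec j else 0) := (Finset.sum_ite_mem univ T _).symm
  _ = ∑ j : J, (if j ∈ T then c j else 0) • vec j := by
        rw [Finset.sum_congr rfl fun j _ => (h1 j).symm]

private lemma isClosed_K (vec : J → (Fin d → ℝ) × ℝ) :
    IsClosed (coneOf vec (univ : Finset J)) := by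
  classical
  have hEq : coneOf vec (univ : Finset J) =
      ⋃ T ∈ (univ : Finset J).powerset.filter
        (fun T => LinearIndependent ℝ (fun j : {j // j ∈ T} => vec j)), coneOf vec T := by
    ext x
    simp only [Set.mem_iUnion, exists_prop, Finset.mem_filter, Finset.mem_powerset]
    constructor
    · intro hx
      obtain ⟨T', hsub, hind, hxT⟩ := cone_caratheodory vec univ x hx
      exact ⟨T', ⟨hsub, hind⟩, hxT⟩
    · rintro ⟨T, _, hxT⟩
      exact coneOf_subset_univ vec T hxT
  rw [hEq]
  exact isClosed_biUnion_finset fun T hT =>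
    isClosed_coneOf_indep vec T (Finset.mem_filter.mp hT).2

private lemma convex_K (vec : J → (Fin d → ℝ) × ℝ) :
    Convex ℝ (coneOf vec (univ : Finset J)) := by
  rintro x ⟨cx, hcx0, rfl⟩ y ⟨cy, hcy0, rfl⟩ α β hα hβ hαβ
  refine ⟨fun j => α * cx j + β * cy j,
    fun j => add_nonneg (mul_nonneg hα (hcx0 j)) (mul_nonneg hβ (hcy0 j)), ?_⟩
  rw [Finset.smul_sum, Finset.smul_sum, ← Finset.sum_add_distrib]
  apply Finset.sum_congr rfl
  intro j _
  rw [add_smul, smul_smul, smul_smul]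

private lemma smul_mem_K (vec : J → (Fin d → ℝ) × ℝ) {t : ℝ} (ht : 0 ≤ t)
    {x : (Fin d → ℝ) × ℝ} (hx : x ∈ coneOf vec (univ : Finset J)) :
    t • x ∈ coneOf vec (univ : Finset J) := by
  obtain ⟨c, hc0, rfl⟩ := hx
  refine ⟨fun j => t * c j, fun j => mul_nonneg ht (hc0 j), ?_⟩
  rw [Finset.smul_sum]
  exact Finset.sum_congr rfl fun j _ => smul_smul t (c j) (vec j)

private lemma zero_mem_K (vec : J → (Fin d → ℝ) × ℝ) :
    (0 : (Fin d → ℝ) × ℝ) ∈ coneOf vec (univ : Finset J) :=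
  ⟨fun _ => 0, fun _ => le_refl 0, by simp⟩

/-- Farkas lemma / theorem of the alternative. -/
theorem farkas_alt {d : ℕ} {J : Type*} [Fintype J] [DecidableEq J]
    (a : J → (Fin d → ℝ)) (b : J → ℝ) :
    (∃ x : Fin d → ℝ, ∀ j, ∑ i, a j i * x i ≤ b j) ∨
    (∃ y : J → ℝ, (∀ j, 0 ≤ y j) ∧ (∀ i, ∑ j, y j * a j i = 0) ∧ ∑ j, y j * b j < 0) := by
  classical
  set vec : J → (Fin d → ℝ) × ℝ := fun j => (a j, b j) with hvec
  by_cases hmem : ((0 : Fin d → ℝ), (-1 : ℝ)) ∈ coneOf vec (univ : Finset J)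
  · right
    obtain ⟨c, hc0, hc⟩ := hmem
    refine ⟨c, hc0, ?_, ?_⟩
    · intro i
      have h1 := congrArg Prod.fst hc
      have h2 : (0 : Fin d → ℝ) = ∑ j : J, c j • a j := by
        simpa [Prod.fst_sum] using h1
      have h3 := congrFun h2 i
      simpa [Finset.sum_apply, eq_comm] using h3.symm
    · have h1 := congrArg Prod.snd hc
      have h2 : (-1 : ℝ) = ∑ j : J, c j * b j := by
        simpa [Prod.snd_sum] using h1
      rw [← h2]
      norm_num
  · left
    obtain ⟨f, u, hfx, hfK⟩ :=
      geometric_hahn_banach_point_closed (convex_K vec) (isClosed_K vec) hmem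
    have hu0 : u < 0 := by
      have := hfK 0 (zero_mem_K vec)
      simpa using this
    have hfnonneg : ∀ k ∈ coneOf vec (univ : Finset J), (0:ℝ) ≤ f k := by
      intro k hk
      by_contra hneg
      push_neg at hneg
      have ht : 0 ≤ u / f k := by
        rw [← neg_div_neg_eq]
        exact div_nonneg (by linarith) (by linarith)
      have hmem2 := smul_mem_K vec ht hk
      have := hfK _ hmem2
      rw [map_smul, smul_eq_mul, div_mul_cancel₀ u (ne_of_lt hneg)] at this
      exact lt_irrefl u this
    set s₀ : ℝ := f ((0 : Fin d → ℝ), (1 : ℝ)) with hs₀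
    have hs₀pos : 0 < s₀ := by
      have h1 : f ((0 : Fin d → ℝ), (-1 : ℝ)) = -s₀ := by
        rw [hs₀, ← map_neg]
        norm_num
    -- f x₀ < u < 0, so -s₀ < 0
      nlinarith [hfx]
    set e : Fin d → (Fin d → ℝ) × ℝ := fun i => (Pi.single i 1, 0) with he
    refine ⟨fun i => -(f (e i)) / s₀, ?_⟩
    intro j
    have hvecK : vec j ∈ coneOf vec (univ : Finset J) := by
      refine ⟨fun j' => if j' = j then 1 else 0, fun j' => by positivity, ?_⟩
      rw [Finset.sum_congr rfl (fun j' _ => by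
        split <;> simp_all : ∀ j' ∈ univ, (if j' = j then (1:ℝ) else 0) • vec j'
          = if j' = j then vec j else 0)]
      simp
    have hdecomp : vec j = (∑ i, a j i • e i) + b j • ((0 : Fin d → ℝ), (1 : ℝ)) := by
      have hfst : a j = ∑ i, a j i • (Pi.single i 1 : Fin d → ℝ) := by
        funext x
        rw [Finset.sum_apply]
        simp only [Pi.smul_apply, Pi.single_apply, smul_eq_mul, mul_ite, mul_one, mul_zero]
        rw [Finset.sum_ite_eq univ x (fun i => a j i)]
        simp
      apply Prod.ext
      · simp [he, Prod.fst_sum, ← hfst, hvec]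
      · simp [he, Prod.snd_sum, hvec]
    have h0 : 0 ≤ f (vec j) := hfnonneg _ hvecK
    rw [hdecomp, map_add, map_sum, map_smul] at h0
    simp only [map_smul, smul_eq_mul] at h0
    have hexp : ∑ i, a j i * f (e i) = ∑ i, a j i * (-(f (e i)) / s₀) * (-s₀) := by
      apply Finset.sum_congr rfl
      intro i _
      field_simp
    rw [hexp] at h0
    have hsum : ∑ i, a j i * (-(f (e i)) / s₀) * (-s₀)
        = (-s₀) * ∑ i, a j i * (-(f (e i)) / s₀) := by
      rw [Finset.mul_sum]
      exact Finset.sum_congr rfl fun i _ => by ring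
    rw [hsum] at h0
    nlinarith [h0]

end FarkasFull

/-- The key graph-theoretic lemma: every graph admits a fractional vertex cover `w` with
entries at least `1/4` whose weight on every independent set is at most `n/4`. -/
theorem graph_cover_lemma (n : ℕ) (Rel : Fin n → Fin n → Prop) :
    ∃ w : Fin n → ℝ, (∀ i, 1/4 ≤ w i) ∧ (∀ u v, Rel u v → 1 ≤ w u + w v) ∧
      (∀ I : Finset (Fin n), (∀ u ∈ I, ∀ v ∈ I, ¬ Rel u v) → ∑ i ∈ I, w i ≤ (n:ℝ)/4) := by
  classical
  set Indep : Finset (Fin n) → Prop := fun I => ∀ u ∈ I, ∀ v ∈ I, ¬ Rel u v with hIndep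
  set a : (Fin n) ⊕ ((Fin n × Fin n) ⊕ (Finset (Fin n))) → (Fin n → ℝ) :=
    fun j => match j with
      | Sum.inl k => fun i => if i = k then (-1:ℝ) else 0
      | Sum.inr (Sum.inl p) => fun i =>
          if Rel p.1 p.2 then (if i = p.1 then (-1:ℝ) else 0) + (if i = p.2 then (-1:ℝ) else 0)
          else 0
      | Sum.inr (Sum.inr I) => fun i => if Indep I ∧ i ∈ I then (1:ℝ) else 0
    with ha
  set b : (Fin n) ⊕ ((Fin n × Fin n) ⊕ (Finset (Fin n))) → ℝ :=
    fun j => match j with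
      | Sum.inl _ => -(1/4 : ℝ)
      | Sum.inr (Sum.inl p) => if Rel p.1 p.2 then (-1:ℝ) else 0
      | Sum.inr (Sum.inr _) => (n:ℝ)/4
    with hb
  rcases farkas_alt a b with ⟨w, hw⟩ | ⟨y, hy0, hyA, hyB⟩
  · -- feasible : read off the three families of constraints
    refine ⟨w, ?_, ?_, ?_⟩
    · intro k
      have := hw (Sum.inl k)
      have hsum : ∑ i, a (Sum.inl k) i * w i = -w k := by
        simp only [ha]
        rw [Finset.sum_congr rfl (fun i _ => by
          split <;> simp_all : ∀ i ∈ univ,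
            (if i = k then (-1:ℝ) else 0) * w i = if i = k then -w i else 0)]
        rw [Finset.sum_ite_eq' univ k (fun i => -w i)]
        simp
      rw [hsum] at this
      have hbk : b (Sum.inl k) = -(1/4) := by rw [hb]
      rw [hbk] at this
      linarith
    · intro u v huv
      have := hw (Sum.inr (Sum.inl (u, v)))
      have hsum : ∑ i, a (Sum.inr (Sum.inl (u,v))) i * w i = -w u - w v := by
        simp only [ha, if_pos huv]
        have hsplit : ∀ i ∈ univ,
            ((if i = u then (-1:ℝ) else 0) + (if i = v then (-1:ℝ) else 0)) * w i
            = (if i = u then -w i else 0) + (if i = v then -w i else 0) := by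
          intro i _
          split_ifs <;> ring
        rw [Finset.sum_congr rfl hsplit, Finset.sum_add_distrib,
          Finset.sum_ite_eq' univ u (fun i => -w i), Finset.sum_ite_eq' univ v (fun i => -w i)]
        simp only [Finset.mem_univ, if_true]
        ring
      rw [hsum] at this
      have hbv : b (Sum.inr (Sum.inl (u,v))) = -1 := by simp [hb, if_pos huv]
      rw [hbv] at this
      linarith
    · intro I hI
      have := hw (Sum.inr (Sum.inr I))
      have hsum : ∑ i, a (Sum.inr (Sum.inr I)) i * w i = ∑ i ∈ I, w i := by
        simp only [ha, hIndep]
        rw [Finset.sum_congr rfl (fun i _ => by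
          by_cases h : i ∈ I
          · rw [if_pos ⟨hI, h⟩, if_pos h, one_mul]
          · rw [if_neg (fun hc => h hc.2), if_neg h, zero_mul] : ∀ i ∈ univ,
            (if (∀ u ∈ I, ∀ v ∈ I, ¬ Rel u v) ∧ i ∈ I then (1:ℝ) else 0) * w i
            = if i ∈ I then w i else 0)]
        rw [Finset.sum_ite_mem, Finset.univ_inter]
      rw [hsum] at this
      have hbI : b (Sum.inr (Sum.inr I)) = (n:ℝ)/4 := by rw [hb]
      rw [hbI] at this
      exact this
  · -- infeasible certificate leads to a contradiction
    exfalso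
    set z : Fin n → ℝ := fun k => y (Sum.inl k) with hz
    set m : Fin n × Fin n → ℝ := fun p => if Rel p.1 p.2 then y (Sum.inr (Sum.inl p)) else 0
      with hm
    set yI : Finset (Fin n) → ℝ := fun I => if Indep I then y (Sum.inr (Sum.inr I)) else 0
      with hyI
    set Y : ℝ := ∑ I : Finset (Fin n), yI I with hY
    set μ : Fin n → ℝ := fun i => ∑ I : Finset (Fin n), yI I * (if i ∈ I then 1 else 0) with hμ
    set dd : Fin n → ℝ := fun i => (∑ v, m (i, v)) + (∑ u, m (u, i)) with hdd
    set ν : ℝ := ∑ p : Fin n × Fin n, m p with hν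
    clear_value Y μ dd ν
    have hmnn : ∀ p, 0 ≤ m p := by
      intro p; rw [hm]; dsimp only; split
      · exact hy0 _
      · exact le_refl 0
    have hyInn : ∀ I, 0 ≤ yI I := by
      intro I; rw [hyI]; dsimp only; split
      · exact hy0 _
      · exact le_refl 0
    have hμnn : ∀ i, 0 ≤ μ i := by
      intro i
      simp only [hμ]
      apply Finset.sum_nonneg
      intro I _
      apply mul_nonneg (hyInn I)
      split <;> norm_num
    have hddnn : ∀ i, 0 ≤ dd i := by
      intro i
      simp only [hdd]
      exact add_nonneg (Finset.sum_nonneg fun v _ => hmnn _)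
        (Finset.sum_nonneg fun u _ => hmnn _)
    have hYnn : 0 ≤ Y := by
      rw [hY]
      exact Finset.sum_nonneg fun I _ => hyInn I
    -- coordinate identities
    have hcoord : ∀ i, μ i = z i + dd i := by
      intro i
      have h0 := hyA i
      rw [Fintype.sum_sum_type] at h0
      have h1 : ∑ k, y (Sum.inl k) * a (Sum.inl k) i = -z i := by
        rw [Finset.sum_congr rfl (fun k _ => by
          simp only [ha]; split <;> simp_all : ∀ k ∈ univ,
            y (Sum.inl k) * a (Sum.inl k) i = if i = k then -z k else 0)]
        rw [Finset.sum_ite_eq univ i (fun k => -z k)]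
        simp
      rw [Fintype.sum_sum_type] at h0
      have h2 : ∑ p : Fin n × Fin n, y (Sum.inr (Sum.inl p)) * a (Sum.inr (Sum.inl p)) i
          = -dd i := by
        have hterm : ∀ p ∈ (univ : Finset (Fin n × Fin n)),
            y (Sum.inr (Sum.inl p)) * a (Sum.inr (Sum.inl p)) i
            = m p * ((if i = p.1 then (-1:ℝ) else 0) + (if i = p.2 then (-1:ℝ) else 0)) := by
          intro p _
          rw [hm]; simp only [ha]
          split <;> simp
        rw [Finset.sum_congr rfl hterm]
        have hsplit : ∑ p : Fin n × Fin n,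
            m p * ((if i = p.1 then (-1:ℝ) else 0) + (if i = p.2 then (-1:ℝ) else 0))
            = (∑ p : Fin n × Fin n, m p * (if i = p.1 then (-1:ℝ) else 0))
              + (∑ p : Fin n × Fin n, m p * (if i = p.2 then (-1:ℝ) else 0)) := by
          rw [← Finset.sum_add_distrib]
          exact Finset.sum_congr rfl fun p _ => by ring
        rw [hsplit]
        have hA : ∑ p : Fin n × Fin n, m p * (if i = p.1 then (-1:ℝ) else 0)
            = -∑ v, m (i, v) := by
          rw [Fintype.sum_prod_type]
          have hterm2 : ∀ u ∈ (univ : Finset (Fin n)),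
              (∑ v, m (u, v) * (if i = u then (-1:ℝ) else 0))
              = if u = i then -∑ v, m (u, v) else 0 := by
            intro u _
            rcases eq_or_ne u i with h | h
            · subst h
              simp [Finset.sum_neg_distrib]
            · rw [if_neg h]
              apply Finset.sum_eq_zero
              intro v _
              rw [if_neg (fun hh => h hh.symm), mul_zero]
          rw [Finset.sum_congr rfl hterm2, Finset.sum_ite_eq' univ i (fun u => -∑ v, m (u, v))]
          simp
        have hB : ∑ p : Fin n × Fin n, m p * (if i = p.2 then (-1:ℝ) else 0)
            = -∑ u, m (u, i) := by
          rw [Fintype.sum_prod_type]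
          have : ∀ u ∈ (univ : Finset (Fin n)),
              (∑ v, m (u, v) * (if i = v then (-1:ℝ) else 0)) = -m (u, i) := by
            intro u _
            rw [Finset.sum_congr rfl (fun v _ => by
              split_ifs <;> ring : ∀ v ∈ univ,
              m (u, v) * (if i = v then (-1:ℝ) else 0) = if i = v then -m (u,v) else 0)]
            rw [Finset.sum_ite_eq univ i (fun v => -m (u, v))]
            simp
          rw [Finset.sum_congr rfl this, Finset.sum_neg_distrib]
        rw [hA, hB, hdd]
        ring
      have h3 : ∑ I : Finset (Fin n), y (Sum.inr (Sum.inr I)) * a (Sum.inr (Sum.inr I)) i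
          = μ i := by
        rw [hμ]
        apply Finset.sum_congr rfl
        intro I _
        rw [hyI]; simp only [ha]
        by_cases hInd : Indep I
        · by_cases hiI : i ∈ I <;> simp [hInd, hiI]
        · simp [hInd]
      rw [h1, h2, h3] at h0
      linarith
    have hdleμ : ∀ i, dd i ≤ μ i := by
      intro i
      have := hcoord i
      have hznn : 0 ≤ z i := hy0 _
      linarith
    have hμleY : ∀ i, μ i ≤ Y := by
      intro i
      rw [hμ, hY]
      apply Finset.sum_le_sum
      intro I _
      have := hyInn I
      split <;> nlinarith
    -- half of (A) : the per-edge independence bound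
    have hedge : ∀ p : Fin n × Fin n, m p * (μ p.1 + μ p.2) ≤ m p * Y := by
      intro p
      by_cases hR : Rel p.1 p.2
      · apply mul_le_mul_of_nonneg_left _ (hmnn p)
        have hsum : μ p.1 + μ p.2 = ∑ I : Finset (Fin n),
            (yI I * (if p.1 ∈ I then 1 else 0) + yI I * (if p.2 ∈ I then 1 else 0)) := by
          rw [hμ, Finset.sum_add_distrib]
        rw [hsum, hY]
        apply Finset.sum_le_sum
        intro I _
        by_cases hInd : Indep I
        · have hnot : ¬ (p.1 ∈ I ∧ p.2 ∈ I) := by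
            rintro ⟨h1, h2⟩
            exact hInd p.1 h1 p.2 h2 hR
          by_cases h1 : p.1 ∈ I
          · have h2 : p.2 ∉ I := fun h2 => hnot ⟨h1, h2⟩
            simp [h1, h2]
          · by_cases h2 : p.2 ∈ I <;> simp [h1, h2, hyInn I]
        · have : yI I = 0 := by rw [hyI]; simp [hInd]
          simp [this]
      · have : m p = 0 := by rw [hm]; simp [hR]
        simp [this]
    have hAineq : ∑ i, dd i * μ i ≤ Y * ν := by
      have hswap : ∑ i, dd i * μ i = ∑ p : Fin n × Fin n, m p * (μ p.1 + μ p.2) := by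
        have hL : ∑ i, (∑ v, m (i, v)) * μ i = ∑ p : Fin n × Fin n, m p * μ p.1 := by
          rw [Fintype.sum_prod_type]
          apply Finset.sum_congr rfl
          intro u _
          rw [Finset.sum_mul]
        have hR : ∑ i, (∑ u, m (u, i)) * μ i = ∑ p : Fin n × Fin n, m p * μ p.2 := by
          rw [Fintype.sum_prod_type_right]
          apply Finset.sum_congr rfl
          intro v _
          rw [Finset.sum_mul]
        have : ∑ i, dd i * μ i = (∑ i, (∑ v, m (i, v)) * μ i) + ∑ i, (∑ u, m (u, i)) * μ i := by
          rw [← Finset.sum_add_distrib]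
          apply Finset.sum_congr rfl
          intro i _
          rw [hdd]; ring
        rw [this, hL, hR, ← Finset.sum_add_distrib]
        apply Finset.sum_congr rfl
        intro p _
        ring
      rw [hswap]
      calc ∑ p : Fin n × Fin n, m p * (μ p.1 + μ p.2) ≤ ∑ p : Fin n × Fin n, m p * Y :=
            Finset.sum_le_sum fun p _ => hedge p
      _ = Y * ν := by rw [hν, Finset.mul_sum]; exact Finset.sum_congr rfl fun p _ => by ring
    have hsumdd : ∑ i, dd i = 2 * ν := by
      have hL : ∑ i, (∑ v, m (i, v)) = ν := by rw [hν, Fintype.sum_prod_type]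
      have hR : ∑ i, (∑ u, m (u, i)) = ν := by rw [hν, Fintype.sum_prod_type_right]
      have : ∑ i, dd i = (∑ i, (∑ v, m (i, v))) + ∑ i, (∑ u, m (u, i)) := by
        rw [← Finset.sum_add_distrib]
        exact Finset.sum_congr rfl fun i _ => by rw [hdd]
      rw [this, hL, hR]; ring
    -- pointwise inequality (B)
    have hB : ∀ i, μ i * Y + 3 * (dd i * Y) - 4 * (dd i * μ i) ≤ Y ^ 2 := by
      intro i
      have h1 : 0 ≤ dd i := hddnn i
      have h2 : dd i ≤ μ i := hdleμ i
      have h3 : μ i ≤ Y := hμleY i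
      have h4 : 0 ≤ μ i := hμnn i
      rcases le_or_gt (3 * Y) (4 * μ i) with h5 | h5
      · nlinarith [mul_nonneg (sub_nonneg.mpr h3) (le_trans h4 h3),
          mul_nonneg h1 (sub_nonneg.mpr h5)]
      · nlinarith [sq_nonneg (Y - 2 * μ i), mul_nonneg (sub_nonneg.mpr h2) (sub_nonneg.mpr h5.le)]
    -- summing (B) and combining with (A)
    have hC : Y * ((∑ i, μ i) + 2 * ν) ≤ (n:ℝ) * Y ^ 2 := by
      have hsumB : ∑ i, (μ i * Y + 3 * (dd i * Y) - 4 * (dd i * μ i)) ≤ (n:ℝ) * Y ^ 2 := by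
        calc ∑ i, (μ i * Y + 3 * (dd i * Y) - 4 * (dd i * μ i))
            ≤ ∑ _i : Fin n, Y ^ 2 := Finset.sum_le_sum fun i _ => hB i
        _ = (n:ℝ) * Y ^ 2 := by simp [mul_comm]
      have hexpand : ∑ i, (μ i * Y + 3 * (dd i * Y) - 4 * (dd i * μ i))
          = (∑ i, μ i) * Y + 3 * Y * (∑ i, dd i) - 4 * ∑ i, dd i * μ i := by
        rw [Finset.sum_sub_distrib, Finset.sum_add_distrib, Finset.sum_mul, Finset.mul_sum,
          Finset.mul_sum]
        congr 1
        congr 1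
        exact Finset.sum_congr rfl fun i _ => by ring
      rw [hexpand] at hsumB
      have h4A : -4 * (Y * ν) ≤ -4 * ∑ i, dd i * μ i := by nlinarith [hAineq]
      nlinarith [hsumdd]
    -- the Farkas strict inequality
    have hFark : (n:ℝ) * Y < (∑ i, μ i) + 2 * ν := by
      have h0 := hyB
      rw [Fintype.sum_sum_type, Fintype.sum_sum_type] at h0
      have h1 : ∑ k, y (Sum.inl k) * b (Sum.inl k) = -(1/4) * ∑ k, z k := by
        rw [Finset.mul_sum]
        apply Finset.sum_congr rfl
        intro k _
        rw [hz, hb]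
        ring
      have h2 : ∑ p : Fin n × Fin n, y (Sum.inr (Sum.inl p)) * b (Sum.inr (Sum.inl p)) = -ν := by
        rw [hν, ← Finset.sum_neg_distrib]
        apply Finset.sum_congr rfl
        intro p _
        rw [hm, hb]
        dsimp only
        split <;> simp
      have h3 : (n:ℝ)/4 * Y ≤ ∑ I : Finset (Fin n),
          y (Sum.inr (Sum.inr I)) * b (Sum.inr (Sum.inr I)) := by
        rw [hY, Finset.mul_sum]
        apply Finset.sum_le_sum
        intro I _
        rw [hyI, hb]
        dsimp only
        split
        · apply le_of_eq; ring
        · have hnn : (0:ℝ) ≤ y (Sum.inr (Sum.inr I)) * ((n:ℝ)/4) :=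
            mul_nonneg (hy0 _) (by positivity)
          simpa using hnn
      have hzsum : ∑ k, z k = (∑ i, μ i) - 2 * ν := by
        have : ∑ k, z k = ∑ i, (μ i - dd i) := by
          apply Finset.sum_congr rfl
          intro i _
          have := hcoord i
          linarith
        rw [this, Finset.sum_sub_distrib, hsumdd]
      rw [h1, h2] at h0
      have hcomb : -(1/4) * ∑ k, z k + -ν + (n:ℝ)/4 * Y < 0 := by linarith
      rw [hzsum] at hcomb
      linarith
    -- final contradiction
    by_cases hYpos : 0 < Y
    · have hstep := mul_lt_mul_of_pos_left hFark hYpos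
      nlinarith [hC, hstep]
    · have hYzero : Y = 0 := le_antisymm (not_lt.mp hYpos) hYnn
      have hμzero : ∀ i, μ i = 0 := fun i =>
        le_antisymm (by rw [← hYzero]; exact hμleY i) (hμnn i)
      have hddzero : ∀ i, dd i = 0 := fun i =>
        le_antisymm (by rw [← hμzero i]; exact hdleμ i) (hddnn i)
      have hνzero : ν = 0 := by
        have : ∑ i, dd i = 0 := Finset.sum_eq_zero fun i _ => hddzero i
        rw [hsumdd] at this
        linarith
      have hμsum : ∑ i, μ i = 0 := Finset.sum_eq_zero fun i _ => hμzero i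
      rw [hYzero, hμsum, hνzero] at hFark
      simp at hFark

private lemma exists_minimal_winning {n : ℕ} (winning : Finset (Fin n) → Prop) :
    ∀ W : Finset (Fin n), winning W →
      ∃ S, S ⊆ W ∧ winning S ∧ ∀ T ⊂ S, ¬ winning T := by
  classical
  intro W
  induction W using Finset.strongInductionOn with
  | _ W ih =>
    intro hW
    by_cases h : ∃ T ⊂ W, winning T
    · obtain ⟨T, hTW, hTwin⟩ := h
      obtain ⟨S, hS1, hS2, hS3⟩ := ih T hTW hTwin
      exact ⟨S, hS1.trans hTW.subset, hS2, hS3⟩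
    · push_neg at h
      exact ⟨W, Finset.Subset.refl W, hW, h⟩

/-- A simple game in which no minimal winning coalition has size 3 satisfies
α(N,v) ≤ n/4. -/
theorem alpha_le_quarter_of_no_min_winning_size_three (n : ℕ)
    (winning : Finset (Fin n) → Prop)
    (hmono : ∀ S T : Finset (Fin n), S ⊆ T → winning S → winning T)
    (hempty : ¬ winning ∅) (hfull : winning Finset.univ)
    (hmin : ∀ W : Finset (Fin n), winning W → (∀ S ⊂ W, ¬ winning S) → W.card ≠ 3) :
    ∃ p : Fin n → ℝ,
      (∀ i, 0 ≤ p i) ∧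
      (∀ W : Finset (Fin n), winning W → 1 ≤ ∑ i ∈ W, p i) ∧
      (∀ L : Finset (Fin n), ¬ winning L → ∑ i ∈ L, p i ≤ (n : ℝ) / 4) := by
  classical
  obtain ⟨w, hw14, hwcov, hwind⟩ := graph_cover_lemma n
    (fun u v => u ≠ v ∧ winning {u, v})
  set p : Fin n → ℝ := fun i => if winning {i} then 1 else w i with hp
  have hp0 : ∀ i, 0 ≤ p i := by
    intro i
    rw [hp]
    dsimp only
    split
    · norm_num
    · linarith [hw14 i]
  refine ⟨p, hp0, ?_, ?_⟩
  · -- winning coalitions get at least 1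
    intro W hW
    by_cases hPass : ∃ i ∈ W, winning {i}
    · obtain ⟨i, hiW, hiwin⟩ := hPass
      have h1 : p i ≤ ∑ j ∈ W, p j := Finset.single_le_sum (fun j _ => hp0 j) hiW
      have h2 : p i = 1 := by rw [hp]; simp [hiwin]
      linarith
    · push_neg at hPass
      by_cases hpair : ∃ u ∈ W, ∃ v ∈ W, u ≠ v ∧ winning {u, v}
      · obtain ⟨u, huW, v, hvW, huv, hwin⟩ := hpair
        have hsub : ({u, v} : Finset (Fin n)) ⊆ W := by
          intro x hx
          rcases Finset.mem_insert.mp hx with h | h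
          · rwa [h]
          · rw [Finset.mem_singleton.mp h]; exact hvW
        have h1 : ∑ j ∈ ({u, v} : Finset (Fin n)), p j ≤ ∑ j ∈ W, p j :=
          Finset.sum_le_sum_of_subset_of_nonneg hsub (fun j _ _ => hp0 j)
        have h2 : ∑ j ∈ ({u, v} : Finset (Fin n)), p j = p u + p v :=
          Finset.sum_pair huv
        have hpu : p u = w u := by rw [hp]; simp [hPass u huW]
        have hpv : p v = w v := by rw [hp]; simp [hPass v hvW]
        have h3 : 1 ≤ w u + w v := hwcov u v ⟨huv, hwin⟩
        rw [h2, hpu, hpv] at h1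
        linarith
      · push_neg at hpair
        obtain ⟨S, hSW, hSwin, hSmin⟩ := exists_minimal_winning winning W hW
        have hc0 : S.card ≠ 0 := by
          intro h
          rw [Finset.card_eq_zero] at h
          exact hempty (h ▸ hSwin)
        have hc1 : S.card ≠ 1 := by
          intro h
          obtain ⟨i, hi⟩ := Finset.card_eq_one.mp h
          apply hPass i (hSW (hi ▸ Finset.mem_singleton_self i))
          exact hi ▸ hSwin
        have hc2 : S.card ≠ 2 := by
          intro h
          obtain ⟨u, v, huv, huvS⟩ := Finset.card_eq_two.mp h
          have huS : u ∈ S := huvS ▸ Finset.mem_insert_self u {v}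
          have hvS : v ∈ S := huvS ▸ Finset.mem_insert_of_mem (Finset.mem_singleton_self v)
          exact hpair u (hSW huS) v (hSW hvS) huv (huvS ▸ hSwin)
        have hc3 : S.card ≠ 3 := hmin S hSwin hSmin
        have hc4 : 4 ≤ S.card := by omega
        have hquarter : (1 : ℝ) ≤ ∑ j ∈ S, w j := by
          have hstep : ∑ j ∈ S, (1/4 : ℝ) ≤ ∑ j ∈ S, w j :=
            Finset.sum_le_sum (fun j _ => hw14 j)
          rw [Finset.sum_const, nsmul_eq_mul] at hstep
          have : (4 : ℝ) ≤ (S.card : ℝ) := by exact_mod_cast hc4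
          nlinarith
        have hWconv : ∑ j ∈ S, w j = ∑ j ∈ S, p j := by
          apply Finset.sum_congr rfl
          intro j hj
          rw [hp]
          simp [hPass j (hSW hj)]
        have hmono2 : ∑ j ∈ S, p j ≤ ∑ j ∈ W, p j :=
          Finset.sum_le_sum_of_subset_of_nonneg hSW (fun j _ _ => hp0 j)
        linarith
  · -- losing coalitions get at most n/4
    intro L hL
    have hLP : ∀ i ∈ L, ¬ winning {i} := by
      intro i hiL hiwin
      exact hL (hmono {i} L (Finset.singleton_subset_iff.mpr hiL) hiwin)
    have hconv : ∑ i ∈ L, p i = ∑ i ∈ L, w i := by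
      apply Finset.sum_congr rfl
      intro i hi
      rw [hp]
      simp [hLP i hi]
    rw [hconv]
    apply hwind
    rintro u hu v hv ⟨huv, hwin⟩
    apply hL
    apply hmono {u, v} L _ hwin
    intro x hx
    rcases Finset.mem_insert.mp hx with h | h
    · rwa [h]
    · rw [Finset.mem_singleton.mp h]; exact hv
end

section
/- Let (N, v) be a complete simple game on n players, with the players ordered so that 1 ≽ 2 ≽ … ≽ n. Then there exists a payoff vector p : N → ℝ with p ≥ 0 such that p(W) = ∑_{i∈W} p_i ≥ 1/√n for every winning coalition W and p(L) = ∑_{i∈L} p_i ≤ ln(n) for every losing coalition L. -/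
open Finset in
private lemma dominance_aux {n : ℕ} {winning : Finset (Fin n) → Prop}
    (hcomplete : ∀ i j : Fin n, i ≤ j → ∀ S : Finset (Fin n), i ∉ S → j ∉ S →
      winning (insert j S) → winning (insert i S)) :
    ∀ m : ℕ, ∀ S G C : Finset (Fin n), S.card = m → G.card = m →
      (∀ g ∈ G, ∀ s ∈ S, g < s) → Disjoint C G → Disjoint C S →
      winning (S ∪ C) → winning (G ∪ C) := by
  intro m
  induction m with
  | zero =>
    intro S G C hS hG _ _ _ hw
    rw [card_eq_zero] at hS hG
    subst hS; subst hG
    exact hw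
  | succ m ih =>
    intro S G C hS hG hlt hCG hCS hw
    have hSne : S.Nonempty := card_pos.mp (by omega)
    have hGne : G.Nonempty := card_pos.mp (by omega)
    set s := S.max' hSne with hs
    set g := G.max' hGne with hg
    have hsS : s ∈ S := S.max'_mem hSne
    have hgG : g ∈ G := G.max'_mem hGne
    have hgs : g < s := hlt g hgG s hsS
    have hgnS : g ∉ S := fun h => lt_irrefl g (hlt g hgG g h)
    have e1 : insert s (S.erase s ∪ C) = S ∪ C := by
      rw [← insert_union, insert_erase hsS]
    have h1 : winning (insert s (S.erase s ∪ C)) := by rw [e1]; exact hw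
    have hgn : g ∉ S.erase s ∪ C := by
      intro h
      rcases mem_union.mp h with h' | h'
      · exact hgnS (mem_of_mem_erase h')
      · exact (disjoint_left.mp hCG h') hgG
    have hsn : s ∉ S.erase s ∪ C := by
      intro h
      rcases mem_union.mp h with h' | h'
      · exact notMem_erase s S h'
      · exact (disjoint_left.mp hCS h') hsS
    have h2 := hcomplete g s hgs.le (S.erase s ∪ C) hgn hsn h1
    have h3 : winning (S.erase s ∪ insert g C) := by
      rw [union_insert]; exact h2
    have h4 := ih (S.erase s) (G.erase g) (insert g C)
      (by rw [card_erase_of_mem hsS, hS]; omega)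
      (by rw [card_erase_of_mem hgG, hG]; omega)
      (fun g' hg' s' hs' => hlt g' (mem_of_mem_erase hg') s' (mem_of_mem_erase hs'))
      (by
        rw [disjoint_insert_left]
        exact ⟨notMem_erase g G, hCG.mono_right (erase_subset _ _)⟩)
      (by
        rw [disjoint_insert_left]
        exact ⟨fun h => hgnS (mem_of_mem_erase h), hCS.mono_right (erase_subset _ _)⟩)
      h3
    rw [union_insert, ← insert_union, insert_erase hgG] at h4
    exact h4

open Finset in
private lemma payoff_general (n c : ℕ) (hn : 0 < n)
    (winning : Finset (Fin n) → Prop)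
    (hmono : ∀ S T : Finset (Fin n), S ⊆ T → winning S → winning T)
    (hempty : ¬ winning ∅) (hfull : winning Finset.univ)
    (hcomplete : ∀ i j : Fin n, i ≤ j → ∀ S : Finset (Fin n), i ∉ S → j ∉ S →
      winning (insert j S) → winning (insert i S))
    (hnum : (c : ℝ) * (Real.sqrt n)⁻¹ + ((n : ℝ) - 1) * (((c : ℝ) + 1) * Real.sqrt n)⁻¹
      ≤ Real.log n) :
    ∃ p : Fin n → ℝ,
      (∀ i, 0 ≤ p i) ∧
      (∀ W : Finset (Fin n), winning W → 1 / Real.sqrt n ≤ ∑ i ∈ W, p i) ∧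
      (∀ L : Finset (Fin n), ¬ winning L → ∑ i ∈ L, p i ≤ Real.log n) := by
  classical
  have hnR : (0 : ℝ) < n := by exact_mod_cast hn
  have hsq : 0 < Real.sqrt n := Real.sqrt_pos.mpr hnR
  set u : ℝ := (((c : ℝ) + 1) * Real.sqrt n)⁻¹ with hu
  have hupos : 0 < u := by positivity
  set good : Fin n → Prop := fun i =>
    ∃ S : Finset (Fin n), winning S ∧ (∀ x ∈ S, i ≤ x) ∧ S.card ≤ c with hgood
  set p : Fin n → ℝ := fun i => (if good i then (Real.sqrt n)⁻¹ else 0) + u with hp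
  have hpnn : ∀ i, 0 ≤ p i := by
    intro i
    simp only [hp]
    split <;> positivity
  have hpu : ∀ i, u ≤ p i := by
    intro i
    simp only [hp]
    split
    · nlinarith [inv_nonneg.mpr hsq.le]
    · simp
  refine ⟨p, hpnn, ?_, ?_⟩
  · intro W hW
    have hWne : W.Nonempty := by
      rcases W.eq_empty_or_nonempty with h | h
      · exact absurd (h ▸ hW) hempty
      · exact h
    by_cases hg : good (W.min' hWne)
    · have h1 : p (W.min' hWne) ≤ ∑ i ∈ W, p i :=
        single_le_sum (fun i _ => hpnn i) (W.min'_mem hWne)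
      have h2 : (Real.sqrt n)⁻¹ ≤ p (W.min' hWne) := by
        simp only [hp, if_pos hg]
        linarith
      rw [one_div]
      exact le_trans h2 h1
    · have hcard : c + 1 ≤ W.card := by
        by_contra h
        exact hg ⟨W, hW, fun x hx => W.min'_le x hx, by omega⟩
      have h1 : (W.card : ℝ) * u ≤ ∑ i ∈ W, p i := by
        calc (W.card : ℝ) * u = ∑ _i ∈ W, u := by rw [sum_const, nsmul_eq_mul]
          _ ≤ ∑ i ∈ W, p i := sum_le_sum (fun i _ => hpu i)
      have h2 : ((c : ℝ) + 1) * u ≤ (W.card : ℝ) * u := by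
        have : ((c : ℝ) + 1) ≤ (W.card : ℝ) := by exact_mod_cast hcard
        nlinarith
      have h3 : ((c : ℝ) + 1) * u = 1 / Real.sqrt n := by
        rw [hu, one_div]
        rw [mul_inv, ← mul_assoc, mul_inv_cancel₀ (by positivity), one_mul]
      linarith
  · intro L hL
    have hfilter : (L.filter good).card ≤ c := by
      by_contra h
      push_neg at h
      obtain ⟨G, hGsub, hGcard⟩ := exists_subset_card_eq h
      have hGne : G.Nonempty := card_pos.mp (by omega)
      set i0 := G.max' hGne with hi0
      have hi0good : good i0 := (mem_filter.mp (hGsub (G.max'_mem hGne))).2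
      obtain ⟨S, hSw, hSlb, hScard⟩ := hi0good
      have hGe : (G.erase i0).card = c := by
        rw [card_erase_of_mem (G.max'_mem hGne), hGcard]; omega
      obtain ⟨G2, hG2sub, hG2card⟩ := exists_subset_card_eq (hGe ▸ hScard)
      have hdom := dominance_aux hcomplete S.card S G2 ∅ rfl hG2card
        (fun g hg s hs => by
          have hgG : g ∈ G := mem_of_mem_erase (hG2sub hg)
          have hgne : g ≠ i0 := ne_of_mem_erase (hG2sub hg)
          have hle : g ≤ i0 := G.le_max' g hgG
          exact lt_of_lt_of_le (lt_of_le_of_ne hle hgne) (hSlb s hs))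
        (disjoint_empty_left _) (disjoint_empty_left _)
        (by rw [union_empty]; exact hSw)
      rw [union_empty] at hdom
      have hG2L : G2 ⊆ L := by
        intro x hx
        exact (mem_filter.mp (hGsub (mem_of_mem_erase (hG2sub hx)))).1
      exact hL (hmono G2 L hG2L hdom)
    have hLcard : (L.card : ℝ) ≤ (n : ℝ) - 1 := by
      have h1 : L.card < n := by
        have h2 : L.card ≤ n := by
          simpa using card_le_card (subset_univ L)
        rcases lt_or_eq_of_le h2 with h | h
        · exact h
        · exfalso
          have : L = univ := eq_univ_of_card L (by simpa using h)
          exact hL (this ▸ hfull)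
      have h3 : L.card + 1 ≤ n := h1
      have h4 : ((L.card + 1 : ℕ) : ℝ) ≤ (n : ℝ) := by exact_mod_cast h3
      push_cast at h4
      linarith
    have hsum : ∑ i ∈ L, p i
        = ((L.filter good).card : ℝ) * (Real.sqrt n)⁻¹ + (L.card : ℝ) * u := by
      simp only [hp, sum_add_distrib, sum_const, nsmul_eq_mul]
      congr 1
      rw [← sum_filter, sum_const, nsmul_eq_mul]
    rw [hsum]
    have h1 : ((L.filter good).card : ℝ) * (Real.sqrt n)⁻¹ ≤ (c : ℝ) * (Real.sqrt n)⁻¹ := by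
      have : ((L.filter good).card : ℝ) ≤ (c : ℝ) := by exact_mod_cast hfilter
      nlinarith [inv_nonneg.mpr hsq.le]
    have h2 : (L.card : ℝ) * u ≤ ((n : ℝ) - 1) * u := by nlinarith
    calc ((L.filter good).card : ℝ) * (Real.sqrt n)⁻¹ + (L.card : ℝ) * u
        ≤ (c : ℝ) * (Real.sqrt n)⁻¹ + ((n : ℝ) - 1) * u := by linarith
      _ ≤ Real.log n := hnum

open Finset in
private lemma two_case
    (winning : Finset (Fin 2) → Prop)
    (hmono : ∀ S T : Finset (Fin 2), S ⊆ T → winning S → winning T)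
    (hempty : ¬ winning ∅) (hfull : winning Finset.univ)
    (hcomplete : ∀ i j : Fin 2, i ≤ j → ∀ S : Finset (Fin 2), i ∉ S → j ∉ S →
      winning (insert j S) → winning (insert i S)) :
    ∃ p : Fin 2 → ℝ,
      (∀ i, 0 ≤ p i) ∧
      (∀ W : Finset (Fin 2), winning W → 1 / Real.sqrt 2 ≤ ∑ i ∈ W, p i) ∧
      (∀ L : Finset (Fin 2), ¬ winning L → ∑ i ∈ L, p i ≤ Real.log 2) := by
  classical
  have hsqrt2 : (1 : ℝ) ≤ Real.sqrt 2 := by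
    rw [show (1:ℝ) = Real.sqrt 1 by simp]
    exact Real.sqrt_le_sqrt (by norm_num)
  have hdiv : 1 / Real.sqrt 2 ≤ 1 := by
    rw [div_le_one (by linarith)]; exact hsqrt2
  have hlog2 : (0.6931471803 : ℝ) < Real.log 2 := Real.log_two_gt_d9
  by_cases h1 : winning {1}
  · have h0 : winning {0} := by
      have := hcomplete 0 1 (by decide) ∅ (by simp) (by simp)
      simpa using this (by simpa using h1)
    refine ⟨fun _ => 1, fun _ => zero_le_one, ?_, ?_⟩
    · intro W hW
      have hWne : W.Nonempty := by
        rcases W.eq_empty_or_nonempty with h | h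
        · exact absurd (h ▸ hW) hempty
        · exact h
      obtain ⟨x, hx⟩ := hWne
      have h2 : (1:ℝ) ≤ ∑ _i ∈ W, (1:ℝ) := by
        simpa using single_le_sum (f := fun _ : Fin 2 => (1:ℝ)) (fun i _ => zero_le_one) hx
      linarith
    · intro L hL
      have hLe : L = ∅ := by
        by_contra hne
        obtain ⟨x, hx⟩ := nonempty_iff_ne_empty.mpr hne
        have hx2 : winning {x} := by
          fin_cases x
          · exact h0
          · exact h1
        exact hL (hmono _ _ (singleton_subset_iff.mpr hx) hx2)
      subst hLe
      simp
      linarith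
  · by_cases h0 : winning {0}
    · set p : Fin 2 → ℝ := ![1, 0] with hp
      have hpnn : ∀ i, 0 ≤ p i := by
        intro i; fin_cases i <;> norm_num [hp]
      refine ⟨p, hpnn, ?_, ?_⟩
      · intro W hW
        have h0W : (0 : Fin 2) ∈ W := by
          by_contra h
          have hsub : W ⊆ {1} := by
            intro x hx
            fin_cases x
            · exact absurd hx h
            · exact mem_singleton_self 1
          exact h1 (hmono _ _ hsub hW)
        have hs : (1:ℝ) ≤ ∑ i ∈ W, p i := by
          have := single_le_sum (f := p) (fun i _ => hpnn i) h0W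
          simpa [hp] using this
        exact hdiv.trans hs
      · intro L hL
        have h0L : (0 : Fin 2) ∉ L := fun h =>
          hL (hmono _ _ (singleton_subset_iff.mpr h) h0)
        have hsub : L ⊆ {1} := by
          intro x hx
          fin_cases x
          · exact absurd hx h0L
          · exact mem_singleton_self 1
        have hs : ∑ i ∈ L, p i ≤ 0 := by
          have := sum_le_sum_of_subset_of_nonneg (f := p) hsub (fun i _ _ => hpnn i)
          simpa [hp] using this
        linarith
    · refine ⟨fun _ => 1/2, fun _ => by norm_num, ?_, ?_⟩
      · intro W hW
        have hWu : W = univ := by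
          by_contra hne
          obtain ⟨x, hx⟩ := by
            rw [eq_univ_iff_forall] at hne
            push_neg at hne
            exact hne
          fin_cases x
          · have hsub : W ⊆ {1} := by
              intro y hy
              fin_cases y
              · exact absurd hy hx
              · exact mem_singleton_self 1
            exact absurd (hmono _ _ hsub hW) h1
          · have hsub : W ⊆ {0} := by
              intro y hy
              fin_cases y
              · exact mem_singleton_self 0
              · exact absurd hy hx
            exact absurd (hmono _ _ hsub hW) h0
        subst hWu
        rw [Fin.sum_univ_two]
        linarith
      · intro L hL
        have hLcard : L.card ≤ 1 := by
          by_contra h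
          have : L = univ := by
            apply eq_univ_of_card
            have := card_le_card (subset_univ L)
            simp at this ⊢
            omega
          exact hL (this ▸ hfull)
        have : ∑ _i ∈ L, (1/2 : ℝ) = L.card * (1/2) := by
          rw [sum_const, nsmul_eq_mul]
        rw [this]
        have : (L.card : ℝ) ≤ 1 := by exact_mod_cast hLcard
        linarith

open Finset in
private lemma three_case
    (winning : Finset (Fin 3) → Prop)
    (hmono : ∀ S T : Finset (Fin 3), S ⊆ T → winning S → winning T)
    (hempty : ¬ winning ∅) (hfull : winning Finset.univ)
    (hcomplete : ∀ i j : Fin 3, i ≤ j → ∀ S : Finset (Fin 3), i ∉ S → j ∉ S →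
      winning (insert j S) → winning (insert i S)) :
    ∃ p : Fin 3 → ℝ,
      (∀ i, 0 ≤ p i) ∧
      (∀ W : Finset (Fin 3), winning W → 1 / Real.sqrt 3 ≤ ∑ i ∈ W, p i) ∧
      (∀ L : Finset (Fin 3), ¬ winning L → ∑ i ∈ L, p i ≤ Real.log 3) := by
  classical
  have hsqrt3 : (1 : ℝ) ≤ Real.sqrt 3 := by
    rw [show (1:ℝ) = Real.sqrt 1 by simp]
    exact Real.sqrt_le_sqrt (by norm_num)
  have hdiv : 1 / Real.sqrt 3 ≤ 1 := by
    rw [div_le_one (by linarith)]; exact hsqrt3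
  have hlog3 : (1 : ℝ) ≤ Real.log 3 := by
    rw [Real.le_log_iff_exp_le (by norm_num)]
    exact le_of_lt (lt_trans Real.exp_one_lt_d9 (by norm_num))
  -- completeness consequences
  have hs21 : winning {2} → winning {1} := by
    intro h
    have := hcomplete 1 2 (by decide) ∅ (by simp) (by simp)
    simpa using this (by simpa using h)
  have hs10 : winning {1} → winning {0} := by
    intro h
    have := hcomplete 0 1 (by decide) ∅ (by simp) (by simp)
    simpa using this (by simpa using h)
  have hp21 : winning ({1, 2} : Finset (Fin 3)) → winning ({0, 2} : Finset (Fin 3)) := by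
    intro h
    have := hcomplete 0 1 (by decide) {2} (by decide) (by decide)
    have e1 : (insert 1 ({2} : Finset (Fin 3))) = {1, 2} := rfl
    have e2 : (insert 0 ({2} : Finset (Fin 3))) = {0, 2} := rfl
    rw [e1, e2] at this
    exact this h
  have hp20 : winning ({0, 2} : Finset (Fin 3)) → winning ({0, 1} : Finset (Fin 3)) := by
    intro h
    have := hcomplete 1 2 (by decide) {0} (by decide) (by decide)
    have e1 : (insert 2 ({0} : Finset (Fin 3))) = {0, 2} := by decide
    have e2 : (insert 1 ({0} : Finset (Fin 3))) = {0, 1} := by decide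
    rw [e1, e2] at this
    exact this h
  by_cases h2 : winning {2}
  · -- all singletons win
    refine ⟨fun _ => 1, fun _ => zero_le_one, ?_, ?_⟩
    · intro W hW
      have hWne : W.Nonempty := by
        rcases W.eq_empty_or_nonempty with h | h
        · exact absurd (h ▸ hW) hempty
        · exact h
      obtain ⟨x, hx⟩ := hWne
      have hs : (1:ℝ) ≤ ∑ _i ∈ W, (1:ℝ) := by
        simpa using single_le_sum (f := fun _ : Fin 3 => (1:ℝ)) (fun i _ => zero_le_one) hx
      linarith
    · intro L hL
      have hLe : L = ∅ := by
        by_contra hne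
        obtain ⟨x, hx⟩ := nonempty_iff_ne_empty.mpr hne
        have hx2 : winning {x} := by
          fin_cases x
          · exact hs10 (hs21 h2)
          · exact hs21 h2
          · exact h2
        exact hL (hmono _ _ (singleton_subset_iff.mpr hx) hx2)
      subst hLe
      simp
      linarith
  · by_cases h1 : winning {1}
    · have h0 : winning {0} := hs10 h1
      set p : Fin 3 → ℝ := ![1, 1, 0] with hp
      have hpnn : ∀ i, 0 ≤ p i := by intro i; fin_cases i <;> norm_num [hp]
      refine ⟨p, hpnn, ?_, ?_⟩
      · intro W hW
        have hor : (0 : Fin 3) ∈ W ∨ (1 : Fin 3) ∈ W := by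
          by_contra h
          push_neg at h
          have hsub : W ⊆ {2} := by
            intro x hx
            fin_cases x
            · exact absurd hx h.1
            · exact absurd hx h.2
            · exact mem_singleton_self 2
          exact h2 (hmono _ _ hsub hW)
        have hs : (1:ℝ) ≤ ∑ i ∈ W, p i := by
          rcases hor with h | h
          · have := single_le_sum (f := p) (fun i _ => hpnn i) h
            simpa [hp] using this
          · have := single_le_sum (f := p) (fun i _ => hpnn i) h
            simpa [hp] using this
        exact hdiv.trans hs
      · intro L hL
        have h0L : (0 : Fin 3) ∉ L := fun h => hL (hmono _ _ (singleton_subset_iff.mpr h) h0)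
        have h1L : (1 : Fin 3) ∉ L := fun h => hL (hmono _ _ (singleton_subset_iff.mpr h) h1)
        have hsub : L ⊆ {2} := by
          intro x hx
          fin_cases x
          · exact absurd hx h0L
          · exact absurd hx h1L
          · exact mem_singleton_self 2
        have hs : ∑ i ∈ L, p i ≤ 0 := by
          have := sum_le_sum_of_subset_of_nonneg (f := p) hsub (fun i _ _ => hpnn i)
          simpa [hp] using this
        linarith
    · have h2' : ¬ winning {2} := h2
      by_cases h0 : winning {0}
      · by_cases h12 : winning ({1, 2} : Finset (Fin 3))
        · have h02 := hp21 h12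
          set p : Fin 3 → ℝ := ![1, 1/2, 1/2] with hp
          have hpnn : ∀ i, 0 ≤ p i := by intro i; fin_cases i <;> norm_num [hp]
          refine ⟨p, hpnn, ?_, ?_⟩
          · intro W hW
            by_cases hw0 : (0 : Fin 3) ∈ W
            · have hs : (1:ℝ) ≤ ∑ i ∈ W, p i := by
                have := single_le_sum (f := p) (fun i _ => hpnn i) hw0
                simpa [hp] using this
              exact hdiv.trans hs
            · have h1W : (1 : Fin 3) ∈ W := by
                by_contra h
                have hsub : W ⊆ {2} := by
                  intro x hx
                  fin_cases x
                  · exact absurd hx hw0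
                  · exact absurd hx h
                  · exact mem_singleton_self 2
                exact h2 (hmono _ _ hsub hW)
              have h2W : (2 : Fin 3) ∈ W := by
                by_contra h
                have hsub : W ⊆ {1} := by
                  intro x hx
                  fin_cases x
                  · exact absurd hx hw0
                  · exact mem_singleton_self 1
                  · exact absurd hx h
                exact h1 (hmono _ _ hsub hW)
              have hsub : ({1, 2} : Finset (Fin 3)) ⊆ W :=
                insert_subset_iff.mpr ⟨h1W, singleton_subset_iff.mpr h2W⟩
              have hs : (1:ℝ) ≤ ∑ i ∈ W, p i := by
                have := sum_le_sum_of_subset_of_nonneg (f := p) hsub (fun i _ _ => hpnn i)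
                have e : ∑ i ∈ ({1, 2} : Finset (Fin 3)), p i = 1 := by
                  rw [sum_pair (by decide : (1 : Fin 3) ≠ 2)]
                  norm_num [hp, Matrix.cons_val_two, Matrix.vecHead, Matrix.vecTail]
                linarith
              exact hdiv.trans hs
          · intro L hL
            have h0L : (0 : Fin 3) ∉ L := fun h => hL (hmono _ _ (singleton_subset_iff.mpr h) h0)
            by_cases h1L : (1 : Fin 3) ∈ L
            · have h2L : (2 : Fin 3) ∉ L := by
                intro h
                exact hL (hmono _ _ (insert_subset_iff.mpr ⟨h1L, singleton_subset_iff.mpr h⟩) h12)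
              have hsub : L ⊆ {1} := by
                intro x hx
                fin_cases x
                · exact absurd hx h0L
                · exact mem_singleton_self 1
                · exact absurd hx h2L
              have hs : ∑ i ∈ L, p i ≤ 1/2 := by
                have := sum_le_sum_of_subset_of_nonneg (f := p) hsub (fun i _ _ => hpnn i)
                simpa [hp] using this
              linarith
            · have hsub : L ⊆ {2} := by
                intro x hx
                fin_cases x
                · exact absurd hx h0L
                · exact absurd hx h1L
                · exact mem_singleton_self 2
              have hs : ∑ i ∈ L, p i ≤ 1/2 := by
                have := sum_le_sum_of_subset_of_nonneg (f := p) hsub (fun i _ _ => hpnn i)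
                simpa [hp] using this
              linarith
        · set p : Fin 3 → ℝ := ![1, 0, 0] with hp
          have hpnn : ∀ i, 0 ≤ p i := by intro i; fin_cases i <;> norm_num [hp]
          refine ⟨p, hpnn, ?_, ?_⟩
          · intro W hW
            have hw0 : (0 : Fin 3) ∈ W := by
              by_contra h
              have hsub : W ⊆ {1, 2} := by
                intro x hx
                fin_cases x
                · exact absurd hx h
                · exact mem_insert_self 1 {2}
                · exact mem_insert_of_mem (mem_singleton_self 2)
              exact h12 (hmono _ _ hsub hW)
            have hs : (1:ℝ) ≤ ∑ i ∈ W, p i := by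
              have := single_le_sum (f := p) (fun i _ => hpnn i) hw0
              simpa [hp] using this
            exact hdiv.trans hs
          · intro L hL
            have h0L : (0 : Fin 3) ∉ L := fun h => hL (hmono _ _ (singleton_subset_iff.mpr h) h0)
            have hsub : L ⊆ {1, 2} := by
              intro x hx
              fin_cases x
              · exact absurd hx h0L
              · exact mem_insert_self 1 {2}
              · exact mem_insert_of_mem (mem_singleton_self 2)
            have hs : ∑ i ∈ L, p i ≤ 0 := by
              have := sum_le_sum_of_subset_of_nonneg (f := p) hsub (fun i _ _ => hpnn i)
              have e : ∑ i ∈ ({1, 2} : Finset (Fin 3)), p i = 0 := by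
                rw [sum_pair (by decide : (1 : Fin 3) ≠ 2)]
                norm_num [hp, Matrix.cons_val_two, Matrix.vecHead, Matrix.vecTail]
              linarith
            linarith
      · -- no singleton wins
        have h1' : ¬ winning {1} := h1
        by_cases h12 : winning ({1, 2} : Finset (Fin 3))
        · have h02 := hp21 h12
          have h01 := hp20 h02
          have hall : ∀ a b : Fin 3, a ≠ b → winning {a, b} := by
            intro a b hab
            fin_cases a <;> fin_cases b
            · exact absurd rfl hab
            · exact h01
            · exact h02
            · rw [pair_comm]; exact h01
            · exact absurd rfl hab
            · exact h12
            · rw [pair_comm]; exact h02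
            · rw [pair_comm]; exact h12
            · exact absurd rfl hab
          refine ⟨fun _ => 1, fun _ => zero_le_one, ?_, ?_⟩
          · intro W hW
            have hWne : W.Nonempty := by
              rcases W.eq_empty_or_nonempty with h | h
              · exact absurd (h ▸ hW) hempty
              · exact h
            obtain ⟨x, hx⟩ := hWne
            have hs : (1:ℝ) ≤ ∑ _i ∈ W, (1:ℝ) := by
              simpa using single_le_sum (f := fun _ : Fin 3 => (1:ℝ)) (fun i _ => zero_le_one) hx
            linarith
          · intro L hL
            have hLcard : L.card ≤ 1 := by
              by_contra h
              push_neg at h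
              obtain ⟨a, ha, b, hb, hab⟩ := one_lt_card.mp h
              exact hL (hmono _ _ (insert_subset_iff.mpr ⟨ha, singleton_subset_iff.mpr hb⟩)
                (hall a b hab))
            have e : ∑ _i ∈ L, (1:ℝ) = L.card := by simp
            rw [e]
            have : (L.card : ℝ) ≤ 1 := by exact_mod_cast hLcard
            linarith
        · by_cases h02 : winning ({0, 2} : Finset (Fin 3))
          · set p : Fin 3 → ℝ := ![1, 0, 0] with hp
            have hpnn : ∀ i, 0 ≤ p i := by intro i; fin_cases i <;> norm_num [hp]
            refine ⟨p, hpnn, ?_, ?_⟩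
            · intro W hW
              have hw0 : (0 : Fin 3) ∈ W := by
                by_contra h
                have hsub : W ⊆ {1, 2} := by
                  intro x hx
                  fin_cases x
                  · exact absurd hx h
                  · exact mem_insert_self 1 {2}
                  · exact mem_insert_of_mem (mem_singleton_self 2)
                exact h12 (hmono _ _ hsub hW)
              have hs : (1:ℝ) ≤ ∑ i ∈ W, p i := by
                have := single_le_sum (f := p) (fun i _ => hpnn i) hw0
                simpa [hp] using this
              exact hdiv.trans hs
            · intro L hL
              have hs : ∑ i ∈ L, p i ≤ 1 := by
                have := sum_le_sum_of_subset_of_nonneg (f := p) (subset_univ L)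
                  (fun i _ _ => hpnn i)
                have e : ∑ i ∈ (univ : Finset (Fin 3)), p i = 1 := by
                  rw [Fin.sum_univ_three]
                  norm_num [hp, Matrix.cons_val_two, Matrix.vecHead, Matrix.vecTail]
                linarith
              linarith
          · by_cases h01 : winning ({0, 1} : Finset (Fin 3))
            · set p : Fin 3 → ℝ := ![1, 1, 0] with hp
              have hpnn : ∀ i, 0 ≤ p i := by intro i; fin_cases i <;> norm_num [hp]
              refine ⟨p, hpnn, ?_, ?_⟩
              · intro W hW
                have hw0 : (0 : Fin 3) ∈ W := by
                  by_contra h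
                  have hsub : W ⊆ {1, 2} := by
                    intro x hx
                    fin_cases x
                    · exact absurd hx h
                    · exact mem_insert_self 1 {2}
                    · exact mem_insert_of_mem (mem_singleton_self 2)
                  exact h12 (hmono _ _ hsub hW)
                have hs : (1:ℝ) ≤ ∑ i ∈ W, p i := by
                  have := single_le_sum (f := p) (fun i _ => hpnn i) hw0
                  simpa [hp] using this
                exact hdiv.trans hs
              · intro L hL
                by_cases h0L : (0 : Fin 3) ∈ L
                · have h1L : (1 : Fin 3) ∉ L := by
                    intro h
                    exact hL (hmono _ _
                      (insert_subset_iff.mpr ⟨h0L, singleton_subset_iff.mpr h⟩) h01)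
                  have hsub : L ⊆ {0, 2} := by
                    intro x hx
                    fin_cases x
                    · exact mem_insert_self 0 {2}
                    · exact absurd hx h1L
                    · exact mem_insert_of_mem (mem_singleton_self 2)
                  have hs : ∑ i ∈ L, p i ≤ 1 := by
                    have := sum_le_sum_of_subset_of_nonneg (f := p) hsub (fun i _ _ => hpnn i)
                    have e : ∑ i ∈ ({0, 2} : Finset (Fin 3)), p i = 1 := by
                      rw [sum_pair (by decide : (0 : Fin 3) ≠ 2)]
                      norm_num [hp, Matrix.cons_val_two, Matrix.vecHead, Matrix.vecTail]
                    linarith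
                  linarith
                · have hsub : L ⊆ {1, 2} := by
                    intro x hx
                    fin_cases x
                    · exact absurd hx h0L
                    · exact mem_insert_self 1 {2}
                    · exact mem_insert_of_mem (mem_singleton_self 2)
                  have hs : ∑ i ∈ L, p i ≤ 1 := by
                    have := sum_le_sum_of_subset_of_nonneg (f := p) hsub (fun i _ _ => hpnn i)
                    have e : ∑ i ∈ ({1, 2} : Finset (Fin 3)), p i = 1 := by
                      rw [sum_pair (by decide : (1 : Fin 3) ≠ 2)]
                      norm_num [hp, Matrix.cons_val_two, Matrix.vecHead, Matrix.vecTail]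
                    linarith
                  linarith
            · -- only univ wins
              refine ⟨fun _ => 1/2, fun _ => by norm_num, ?_, ?_⟩
              · intro W hW
                have hWu : W = univ := by
                  by_contra hne
                  obtain ⟨x, hx⟩ : ∃ x, x ∉ W := by
                    rw [eq_univ_iff_forall] at hne
                    push_neg at hne
                    exact hne
                  fin_cases x
                  · have hsub : W ⊆ {1, 2} := by
                      intro y hy
                      fin_cases y
                      · exact absurd hy hx
                      · exact mem_insert_self 1 {2}
                      · exact mem_insert_of_mem (mem_singleton_self 2)
                    exact h12 (hmono _ _ hsub hW)
                  · have hsub : W ⊆ {0, 2} := by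
                      intro y hy
                      fin_cases y
                      · exact mem_insert_self 0 {2}
                      · exact absurd hy hx
                      · exact mem_insert_of_mem (mem_singleton_self 2)
                    exact h02 (hmono _ _ hsub hW)
                  · have hsub : W ⊆ {0, 1} := by
                      intro y hy
                      fin_cases y
                      · exact mem_insert_self 0 {1}
                      · exact mem_insert_of_mem (mem_singleton_self 1)
                      · exact absurd hy hx
                    exact h01 (hmono _ _ hsub hW)
                subst hWu
                rw [Fin.sum_univ_three]
                linarith
              · intro L hL
                have hLcard : L.card ≤ 2 := by
                  by_contra h
                  push_neg at h
                  have hcu : L.card = 3 := by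
                    have := card_le_card (subset_univ L)
                    simp at this
                    omega
                  have : L = univ := eq_univ_of_card L (by simpa using hcu)
                  exact hL (this ▸ hfull)
                have e : ∑ _i ∈ L, (1/2 : ℝ) = L.card * (1/2) := by
                  rw [sum_const, nsmul_eq_mul]
                rw [e]
                have : (L.card : ℝ) ≤ 2 := by exact_mod_cast hLcard
                linarith

/-- In a complete simple game on n players there is a nonnegative payoff p
with p(W) ≥ 1/√n for every winning coalition W and p(L) ≤ ln n for every losing
coalition L. -/
theorem complete_payoff_sqrt_log (n : ℕ)
    (winning : Finset (Fin n) → Prop)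
    (hmono : ∀ S T : Finset (Fin n), S ⊆ T → winning S → winning T)
    (hempty : ¬ winning ∅) (hfull : winning Finset.univ)
    (hcomplete : ∀ i j : Fin n, i ≤ j → ∀ S : Finset (Fin n), i ∉ S → j ∉ S →
      winning (insert j S) → winning (insert i S)) :
    ∃ p : Fin n → ℝ,
      (∀ i, 0 ≤ p i) ∧
      (∀ W : Finset (Fin n), winning W → 1 / Real.sqrt n ≤ ∑ i ∈ W, p i) ∧
      (∀ L : Finset (Fin n), ¬ winning L → ∑ i ∈ L, p i ≤ Real.log n) := by
  classical
  have hlog2 : (0.6931471803 : ℝ) < Real.log 2 := Real.log_two_gt_d9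
  have hlog3 : (1 : ℝ) ≤ Real.log 3 := by
    rw [Real.le_log_iff_exp_le (by norm_num)]
    exact le_of_lt (lt_trans Real.exp_one_lt_d9 (by norm_num))
  rcases Nat.lt_or_ge n 8 with h8 | h8
  · interval_cases n
    · exact absurd (by simpa using hfull) hempty
    · -- n = 1
      apply payoff_general 1 0 (by norm_num) winning hmono hempty hfull hcomplete
      norm_num
    · -- n = 2
      have := two_case winning hmono hempty hfull hcomplete
      exact_mod_cast this
    · -- n = 3
      have := three_case winning hmono hempty hfull hcomplete
      exact_mod_cast this
    · -- n = 4
      apply payoff_general 4 1 (by norm_num) winning hmono hempty hfull hcomplete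
      push_cast
      rw [show ((4:ℝ)) = 2^(2:ℕ) by norm_num, Real.log_pow,
        Real.sqrt_sq (by norm_num : (0:ℝ) ≤ 2)]
      push_cast
      norm_num
      linarith
    · -- n = 5
      apply payoff_general 5 1 (by norm_num) winning hmono hempty hfull hcomplete
      push_cast
      have hs : (2.236 : ℝ) ≤ Real.sqrt 5 := by
        calc (2.236:ℝ) = Real.sqrt (2.236^2) := (Real.sqrt_sq (by norm_num)).symm
          _ ≤ Real.sqrt 5 := Real.sqrt_le_sqrt (by norm_num)
      have hs0 : (0:ℝ) < Real.sqrt 5 := by linarith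
      have hinv : (Real.sqrt 5)⁻¹ ≤ (2.236:ℝ)⁻¹ := by
        apply inv_anti₀ (by norm_num) hs
      have h2inv : ((1 + 1) * Real.sqrt 5)⁻¹ ≤ ((1+1) * 2.236 : ℝ)⁻¹ := by
        apply inv_anti₀ (by norm_num) (by nlinarith)
      have hlog : (2:ℝ) * Real.log 2 ≤ Real.log 5 := by
        have e : (2:ℝ) * Real.log 2 = Real.log 4 := by
          rw [show (4:ℝ) = 2^(2:ℕ) by norm_num, Real.log_pow]
          push_cast; ring
        rw [e]
        exact Real.log_le_log (by norm_num) (by norm_num)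
      nlinarith
    · -- n = 6
      apply payoff_general 6 2 (by norm_num) winning hmono hempty hfull hcomplete
      push_cast
      have hs : (2.449 : ℝ) ≤ Real.sqrt 6 := by
        calc (2.449:ℝ) = Real.sqrt (2.449^2) := (Real.sqrt_sq (by norm_num)).symm
          _ ≤ Real.sqrt 6 := Real.sqrt_le_sqrt (by norm_num)
      have hs0 : (0:ℝ) < Real.sqrt 6 := by linarith
      have hinv : (Real.sqrt 6)⁻¹ ≤ (2.449:ℝ)⁻¹ := by
        apply inv_anti₀ (by norm_num) hs
      have h2inv : ((2 + 1) * Real.sqrt 6)⁻¹ ≤ ((2+1) * 2.449 : ℝ)⁻¹ := by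
        apply inv_anti₀ (by norm_num) (by nlinarith)
      have hlog : Real.log 2 + 1 ≤ Real.log 6 := by
        have e : Real.log 6 = Real.log 2 + Real.log 3 := by
          rw [show (6:ℝ) = 2*3 by norm_num, Real.log_mul (by norm_num) (by norm_num)]
        linarith
      nlinarith
    · -- n = 7
      apply payoff_general 7 2 (by norm_num) winning hmono hempty hfull hcomplete
      push_cast
      have hs : (2.645 : ℝ) ≤ Real.sqrt 7 := by
        calc (2.645:ℝ) = Real.sqrt (2.645^2) := (Real.sqrt_sq (by norm_num)).symm
          _ ≤ Real.sqrt 7 := Real.sqrt_le_sqrt (by norm_num)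
      have hs0 : (0:ℝ) < Real.sqrt 7 := by linarith
      have hinv : (Real.sqrt 7)⁻¹ ≤ (2.645:ℝ)⁻¹ := by
        apply inv_anti₀ (by norm_num) hs
      have h2inv : ((2 + 1) * Real.sqrt 7)⁻¹ ≤ ((2+1) * 2.645 : ℝ)⁻¹ := by
        apply inv_anti₀ (by norm_num) (by nlinarith)
      have hlog : Real.log 2 + 1 ≤ Real.log 7 := by
        have e : Real.log 6 = Real.log 2 + Real.log 3 := by
          rw [show (6:ℝ) = 2*3 by norm_num, Real.log_mul (by norm_num) (by norm_num)]
        have : Real.log 6 ≤ Real.log 7 := Real.log_le_log (by norm_num) (by norm_num)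
        linarith
      nlinarith
  · -- n ≥ 8
    apply payoff_general n (Nat.sqrt n) (by omega) winning hmono hempty hfull hcomplete
    have hnR : (8 : ℝ) ≤ (n : ℝ) := by exact_mod_cast h8
    have hn0 : (0 : ℝ) < (n : ℝ) := by linarith
    have hsq : 0 < Real.sqrt n := Real.sqrt_pos.mpr hn0
    set c : ℕ := Nat.sqrt n with hc
    have hc1 : (c : ℝ) ≤ Real.sqrt n := by
      have h1 : (c : ℝ) * (c : ℝ) ≤ (n : ℝ) := by
        have h := Nat.sqrt_le' n
        have h' : c * c ≤ n := le_trans (le_of_eq (pow_two c).symm) h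
        exact_mod_cast h'
      calc (c : ℝ) = Real.sqrt ((c:ℝ) * (c:ℝ)) := by
            rw [show (c:ℝ) * (c:ℝ) = (c:ℝ)^2 by ring, Real.sqrt_sq (by positivity)]
        _ ≤ Real.sqrt n := Real.sqrt_le_sqrt h1
    have hc2 : Real.sqrt n ≤ (c : ℝ) + 1 := by
      have h1 : (n : ℝ) ≤ ((c:ℝ) + 1) * ((c:ℝ) + 1) := by
        have h := Nat.lt_succ_sqrt' n
        have h' : n < (c + 1) ^ 2 := by simpa [Nat.succ_eq_add_one] using h
        have h2 : n ≤ (c + 1) * (c + 1) := le_trans h'.le (le_of_eq (pow_two _))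
        exact_mod_cast h2
      calc Real.sqrt n ≤ Real.sqrt (((c:ℝ)+1) * ((c:ℝ)+1)) := Real.sqrt_le_sqrt h1
        _ = (c:ℝ) + 1 := by
            rw [show ((c:ℝ)+1) * ((c:ℝ)+1) = ((c:ℝ)+1)^2 by ring,
              Real.sqrt_sq (by positivity)]
    have hss : Real.sqrt n * Real.sqrt n = (n : ℝ) := Real.mul_self_sqrt hn0.le
    have t1 : (c : ℝ) * (Real.sqrt n)⁻¹ ≤ 1 := by
      rw [← div_eq_mul_inv, div_le_one hsq]
      exact hc1
    have t2 : ((n : ℝ) - 1) * (((c : ℝ) + 1) * Real.sqrt n)⁻¹ ≤ 1 := by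
      rw [← div_eq_mul_inv, div_le_one (by positivity)]
      nlinarith
    have hlogn : (2 : ℝ) ≤ Real.log n := by
      have e : Real.log 8 = 3 * Real.log 2 := by
        rw [show (8:ℝ) = 2^(3:ℕ) by norm_num, Real.log_pow]
        push_cast; ring
      have h1 : Real.log 8 ≤ Real.log n := Real.log_le_log (by norm_num) hnR
      linarith [Real.log_two_gt_d9]
    linarith
end

section
/- Let G = (V, E) be a finite simple graph whose maximum independent set has size k, and let G* be the graph on vertex set V × {1, 2} in which distinct vertices (u, a) and (v, b) are adjacent if and only if u = v or uv ∈ E. Then: (a) the constant payoff p ≡ 1/2 on V × {1,2} satisfies p(x) + p(y) ≥ 1 for every edge xy of G*, and every independent set L* of G* satisfies ∑_{x∈L*} p(x) ≤ k/2; and (b) for every payoff p* : V × {1,2} → ℝ with p* ≥ 0 and p*(x) + p*(y) ≥ 1 for every edge xy of G*, there exists an independent set L* of G* with ∑_{x∈L*} p*(x) ≥ k/2. (Hence the critical threshold value of the graphic game on G* equals k/2.) -/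
/-- The strong product `G*` of a graph `G` with a single edge: vertex set `V × Bool`,
with distinct vertices `(u, a)` and `(v, b)` adjacent iff `u = v` or `u ~ v` in `G`. -/
def strongProdEdge {V : Type*} (G : SimpleGraph V) : SimpleGraph (V × Bool) where
  Adj x y := x ≠ y ∧ (x.1 = y.1 ∨ G.Adj x.1 y.1)
  symm := by
    constructor
    intro x y h
    exact ⟨h.1.symm, h.2.imp Eq.symm (fun ha => G.adj_symm ha)⟩
  loopless := by
    constructor
    intro x h
    exact h.1 rfl

/-- If the maximum independent set of G has size k, then the critical
threshold value of the graphic game on G* equals k/2: (a) the constant payoff 1/2 is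
feasible and gives at most k/2 on every independent set of G*; (b) every feasible payoff
gives at least k/2 on some independent set of G*. -/
theorem strongProdEdge_alpha_eq_half_max_independent {V : Type*} [Fintype V]
    (G : SimpleGraph V) (k : ℕ)
    (hex : ∃ L : Finset V, (∀ u ∈ L, ∀ v ∈ L, ¬ G.Adj u v) ∧ L.card = k)
    (hmax : ∀ L : Finset V, (∀ u ∈ L, ∀ v ∈ L, ¬ G.Adj u v) → L.card ≤ k) :
    ((∀ x y : V × Bool, (strongProdEdge G).Adj x y → 1 ≤ (1 : ℝ) / 2 + 1 / 2) ∧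
     (∀ Lstar : Finset (V × Bool),
        (∀ x ∈ Lstar, ∀ y ∈ Lstar, ¬ (strongProdEdge G).Adj x y) →
        ∑ _x ∈ Lstar, (1 : ℝ) / 2 ≤ (k : ℝ) / 2)) ∧
    (∀ pstar : V × Bool → ℝ, (∀ x, 0 ≤ pstar x) →
      (∀ x y : V × Bool, (strongProdEdge G).Adj x y → 1 ≤ pstar x + pstar y) →
      ∃ Lstar : Finset (V × Bool),
        (∀ x ∈ Lstar, ∀ y ∈ Lstar, ¬ (strongProdEdge G).Adj x y) ∧
        (k : ℝ) / 2 ≤ ∑ x ∈ Lstar, pstar x) := by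
  classical
  constructor
  · constructor
    · intro x y _; norm_num
    · intro Lstar hind
      have hinj : Set.InjOn Prod.fst (Lstar : Set (V × Bool)) := by
        intro x hx y hy hxy
        by_contra hne
        exact hind x hx y hy ⟨hne, Or.inl hxy⟩
      have hsub : Lstar.card ≤ k := by
        have h2 := hmax (Lstar.image Prod.fst) ?_
        · rwa [Finset.card_image_of_injOn hinj] at h2
        · intro u hu v hv hadj
          obtain ⟨x, hx, rfl⟩ := Finset.mem_image.mp hu
          obtain ⟨y, hy, rfl⟩ := Finset.mem_image.mp hv
          have hne : x ≠ y := by rintro rfl; exact G.loopless.irrefl _ hadj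
          exact hind x hx y hy ⟨hne, Or.inr hadj⟩
      rw [Finset.sum_const, nsmul_eq_mul]
      have : (Lstar.card : ℝ) ≤ (k : ℝ) := by exact_mod_cast hsub
      linarith
  · intro p hp0 hfeas
    obtain ⟨L, hLind, hLcard⟩ := hex
    set f : V → V × Bool := fun v =>
      (v, if p (v, false) ≤ p (v, true) then true else false) with hf
    refine ⟨L.image f, ?_, ?_⟩
    · intro x hx y hy
      obtain ⟨u, hu, rfl⟩ := Finset.mem_image.mp hx
      obtain ⟨v, hv, rfl⟩ := Finset.mem_image.mp hy
      rintro ⟨hne, h | h⟩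
      · exact hne (by simp only [hf] at h ⊢; simp [h])
      · exact hLind u hu v hv h
    · have hinj : ∀ x ∈ L, ∀ y ∈ L, f x = f y → x = y :=
        fun x _ y _ h => congrArg Prod.fst h
      rw [Finset.sum_image hinj]
      have hhalf : ∀ v ∈ L, (1:ℝ)/2 ≤ p (f v) := by
        intro v _
        have hadj : (strongProdEdge G).Adj (v, true) (v, false) := ⟨by simp, Or.inl rfl⟩
        have h1 := hfeas _ _ hadj
        by_cases hle : p (v, false) ≤ p (v, true)
        · simp only [hf, hle, if_true]; linarith
        · simp only [hf, hle, if_false]; push_neg at hle; linarith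
      calc (k:ℝ)/2 = ∑ _v ∈ L, (1:ℝ)/2 := by
            rw [Finset.sum_const, hLcard, nsmul_eq_mul]; ring
        _ ≤ _ := Finset.sum_le_sum hhalf
end

section
/- Let n ≥ 4 be an even integer and let C_n be the cycle graph on vertex set {1, …, n} with edges {i, i+1} for i = 1, …, n−1 and the edge {n, 1}. Then: (a) for every payoff p : {1,…,n} → ℝ with p ≥ 0 and p(i) + p(j) ≥ 1 for every edge ij of C_n, there exists an independent set L of C_n with ∑_{i∈L} p(i) ≥ n/4; and (b) the constant payoff p ≡ 1/2 satisfies p(i) + p(j) ≥ 1 on every edge and ∑_{i∈L} p(i) ≤ n/4 for every independent set L. (Hence the critical threshold value of the graphic game on C_n equals n/4.) -/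
/-- The cycle graph on vertex set `Fin n`, with edges `{i, i+1 (mod n)}`. -/
def cycleGraph (n : ℕ) : SimpleGraph (Fin n) where
  Adj i j := i ≠ j ∧ ((i.val + 1) % n = j.val ∨ (j.val + 1) % n = i.val)
  symm := by
    constructor
    intro i j h
    exact ⟨h.1.symm, h.2.symm⟩
  loopless := by
    constructor
    intro i h
    exact h.1 rfl

/-- For even n ≥ 4, the critical threshold value of the graphic game on the
cycle C_n equals n/4: (a) every feasible payoff gives at least n/4 on some independent
set; (b) the constant payoff 1/2 is feasible and gives at most n/4 on every independent
set. -/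
theorem cycle_alpha_eq_quarter (n : ℕ) (hn : 4 ≤ n) (heven : Even n) :
    (∀ p : Fin n → ℝ, (∀ i, 0 ≤ p i) →
      (∀ i j : Fin n, (cycleGraph n).Adj i j → 1 ≤ p i + p j) →
      ∃ L : Finset (Fin n), (∀ i ∈ L, ∀ j ∈ L, ¬ (cycleGraph n).Adj i j) ∧
        (n : ℝ) / 4 ≤ ∑ i ∈ L, p i) ∧
    ((∀ i j : Fin n, (cycleGraph n).Adj i j → 1 ≤ (1 : ℝ) / 2 + 1 / 2) ∧
     (∀ L : Finset (Fin n), (∀ i ∈ L, ∀ j ∈ L, ¬ (cycleGraph n).Adj i j) →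
        ∑ _i ∈ L, (1 : ℝ) / 2 ≤ (n : ℝ) / 4)) := by
  obtain ⟨m, hm⟩ := heven
  subst hm
  have hm2 : 2 ≤ m := by omega
  have hNpos : 0 < m + m := by omega
  -- arithmetic description of successor mod m+m
  have hmod : ∀ a : ℕ, a < m + m →
      (a + 1 = m + m ∧ (a + 1) % (m + m) = 0) ∨
      (a + 1 < m + m ∧ (a + 1) % (m + m) = a + 1) := by
    intro a ha
    by_cases h : a + 1 = m + m
    · exact Or.inl ⟨h, by rw [h, Nat.mod_self]⟩
    · exact Or.inr ⟨by omega, Nat.mod_eq_of_lt (by omega)⟩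
  set s : Fin (m+m) → Fin (m+m) := fun i => ⟨(i.val+1) % (m+m), Nat.mod_lt _ hNpos⟩ with hs
  have hadj : ∀ i : Fin (m+m), (cycleGraph (m+m)).Adj i (s i) := by
    intro i
    refine ⟨?_, Or.inl rfl⟩
    intro h
    have h2 : i.val = (s i).val := congrArg Fin.val h
    simp only [hs, Fin.val_mk] at h2
    have hv := hmod i.val i.isLt
    have := i.isLt
    omega
  -- same parity vertices are non-adjacent
  have hpar : ∀ i j : Fin (m+m), i.val % 2 = j.val % 2 → ¬ (cycleGraph (m+m)).Adj i j := by
    intro i j hpij ha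
    obtain ⟨hne, hc⟩ := ha
    rcases hc with h | h
    · have hv := hmod i.val i.isLt; omega
    · have hv := hmod j.val j.isLt; omega
  constructor
  · -- part (a)
    intro p hpos hfeas
    set E : Finset (Fin (m+m)) := Finset.univ.filter (fun i => i.val % 2 = 0) with hE
    set O : Finset (Fin (m+m)) := Finset.univ.filter (fun i => ¬ i.val % 2 = 0) with hO
    have hEmem : ∀ i : Fin (m+m), i ∈ E ↔ i.val % 2 = 0 := by
      intro i; simp [hE]
    have hOmem : ∀ i : Fin (m+m), i ∈ O ↔ i.val % 2 = 1 := by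
      intro i
      rw [hO, Finset.mem_filter]
      simp only [Finset.mem_univ, true_and]
      omega
    -- s maps E bijectively to O
    have hsE : ∀ i ∈ E, s i ∈ O := by
      intro i hi
      rw [hEmem] at hi
      rw [hOmem]
      simp only [hs, Fin.val_mk]
      have hv := hmod i.val i.isLt
      omega
    have hsumEO : ∑ i ∈ E, p (s i) = ∑ j ∈ O, p j := by
      apply Finset.sum_nbij' (i := s)
        (j := fun j => ⟨j.val - 1, by have := j.isLt; omega⟩)
      · exact hsE
      · intro j hj
        rw [hOmem] at hj
        rw [hEmem]
        simp only [Fin.val_mk]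
        have := j.isLt
        omega
      · intro i hi
        rw [hEmem] at hi
        apply Fin.ext
        simp only [hs, Fin.val_mk]
        have hv := hmod i.val i.isLt
        have := i.isLt
        omega
      · intro j hj
        rw [hOmem] at hj
        apply Fin.ext
        have hjl := j.isLt
        simp only [hs, Fin.val_mk]
        rw [Nat.mod_eq_of_lt (by omega)]
        omega
      · intro i _
        rfl
    -- card of E is m
    have hcardE : E.card = m := by
      refine Eq.trans ?_ (Finset.card_range m)
      apply Finset.card_nbij' (i := fun i => i.val / 2)
        (j := fun k => if h : 2 * k < m + m then (⟨2 * k, h⟩ : Fin (m+m)) else ⟨0, hNpos⟩)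
      · intro i hi
        rw [Finset.mem_coe, hEmem] at hi
        have := i.isLt
        simp only [Finset.mem_coe, Finset.mem_range]
        omega
      · intro k hk
        simp only [Finset.mem_coe, Finset.mem_range] at hk
        have h2k : 2 * k < m + m := by omega
        simp only [Finset.mem_coe]
        rw [dif_pos h2k, hEmem]
        simp only [Fin.val_mk]
        omega
      · intro i hi
        rw [Finset.mem_coe, hEmem] at hi
        have := i.isLt
        have h2k : 2 * (i.val / 2) < m + m := by omega
        beta_reduce
        rw [dif_pos h2k]
        apply Fin.ext
        simp only [Fin.val_mk]
        omega
      · intro k hk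
        simp only [Finset.mem_coe, Finset.mem_range] at hk
        have h2k : 2 * k < m + m := by omega
        beta_reduce
        rw [dif_pos h2k]
        simp only [Fin.val_mk]
        omega
    -- total sum bound
    have hEsum : (m : ℝ) ≤ ∑ i ∈ E, (p i + p (s i)) := by
      have h1 : ∀ i ∈ E, (1:ℝ) ≤ p i + p (s i) := fun i _ => hfeas i (s i) (hadj i)
      have h2 : ∑ _i ∈ E, (1:ℝ) ≤ ∑ i ∈ E, (p i + p (s i)) := Finset.sum_le_sum h1
      rw [Finset.sum_const, hcardE, nsmul_eq_mul, mul_one] at h2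
      exact h2
    have hsplit : ∑ i ∈ E, p i + ∑ j ∈ O, p j = ∑ i, p i := by
      rw [hE, hO]
      exact Finset.sum_filter_add_sum_filter_not _ _ _
    have htot : (m : ℝ) ≤ ∑ i ∈ E, p i + ∑ j ∈ O, p j := by
      rw [← hsumEO]
      calc (m : ℝ) ≤ ∑ i ∈ E, (p i + p (s i)) := hEsum
      _ = ∑ i ∈ E, p i + ∑ i ∈ E, p (s i) := Finset.sum_add_distrib
    by_cases hc : (m : ℝ) / 2 ≤ ∑ i ∈ E, p i
    · refine ⟨E, ?_, ?_⟩
      · intro i hi j hj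
        rw [hEmem] at hi hj
        exact hpar i j (by omega)
      · push_cast
        linarith
    · refine ⟨O, ?_, ?_⟩
      · intro i hi j hj
        rw [hOmem] at hi hj
        exact hpar i j (by omega)
      · push_cast
        linarith
  · constructor
    · intro i j _; norm_num
    · intro L hL
      have hcard : L.card ≤ m := by
        calc L.card ≤ (Finset.range m).card := by
              apply Finset.card_le_card_of_injOn (fun i : Fin (m+m) => i.val / 2)
              · intro i hi
                have := i.isLt
                simp only [Finset.mem_coe, Finset.mem_range]
                omega
              · intro i hi j hj hij
                simp only [Finset.mem_coe] at hi hj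
                by_contra hne
                have hvne : i.val ≠ j.val := fun h => hne (Fin.ext h)
                simp only at hij
                have hcase : i.val + 1 = j.val ∨ j.val + 1 = i.val := by omega
                rcases hcase with h | h
                · exact hL i hi j hj ⟨hne, Or.inl
                    (by rw [Nat.mod_eq_of_lt (by have := j.isLt; omega)]; exact h)⟩
                · exact hL i hi j hj ⟨hne, Or.inr
                    (by rw [Nat.mod_eq_of_lt (by have := i.isLt; omega)]; exact h)⟩
          _ = m := Finset.card_range m
      rw [Finset.sum_const, nsmul_eq_mul]
      have hc : (L.card : ℝ) ≤ m := by exact_mod_cast hcard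
      push_cast
      linarith
end

section
/- Let G be a finite bipartite graph with parts A and B that has no isolated vertices, satisfies |A| ≤ |B|, and is well-spread with parameter λ = |A|/n where n = |A| + |B| (that is, |S|·|B| ≤ |N(S)|·|A| for every S ⊆ A). Define the payoff p : A ∪ B → ℝ by p(b) = 1/(4(1−λ)) for b ∈ B and p(a) = 1 − 1/(4(1−λ)) for a ∈ A. Then p(v) ≥ 1/4 for every vertex v, p(u) + p(v) ≥ 1 for every edge uv of G, and every independent set L ⊆ A ∪ B satisfies ∑_{v∈L} p(v) ≤ n/4. -/
/-- For a well-spread bipartite graph, the payoff with value 1/(4(1−λ)) on B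
and 1 − 1/(4(1−λ)) on A is at least 1/4 everywhere, satisfies all edges, and gives at most
n/4 on every independent set. -/
theorem wellSpread_modified_payoff {V : Type*} [Fintype V] [DecidableEq V]
    (G : SimpleGraph V) [DecidableRel G.Adj]
    (A B : Finset V) (hdisj : Disjoint A B) (hcover : A ∪ B = Finset.univ)
    (hbip : ∀ u v : V, G.Adj u v → (u ∈ A ∧ v ∈ B) ∨ (u ∈ B ∧ v ∈ A))
    (hiso : ∀ v : V, ∃ u : V, G.Adj u v)
    (hcard : A.card ≤ B.card)
    (hws : ∀ S ⊆ A, S.card * B.card ≤ (B.filter (fun b => ∃ a ∈ S, G.Adj a b)).card * A.card)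
    (n : ℕ) (hn : n = A.card + B.card)
    (lam : ℝ) (hlam : lam = (A.card : ℝ) / n)
    (p : V → ℝ)
    (hp : ∀ v : V, p v = if v ∈ A then 1 - 1 / (4 * (1 - lam)) else 1 / (4 * (1 - lam))) :
    (∀ v : V, (1 : ℝ) / 4 ≤ p v) ∧
    (∀ u v : V, G.Adj u v → 1 ≤ p u + p v) ∧
    (∀ L : Finset V, (∀ u ∈ L, ∀ v ∈ L, ¬ G.Adj u v) → ∑ v ∈ L, p v ≤ (n : ℝ) / 4) := by
  rcases isEmpty_or_nonempty V with hV | hV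
  · refine ⟨fun v => ((hV.false v)).elim, fun u v h => ((hV.false v)).elim, fun L hL => ?_⟩
    have hL0 : L = ∅ := Finset.eq_empty_of_isEmpty L
    have hA0 : A = ∅ := Finset.eq_empty_of_isEmpty A
    have hB0 : B = ∅ := Finset.eq_empty_of_isEmpty B
    simp [hL0, hn, hA0, hB0]
  · obtain ⟨v0⟩ := hV
    obtain ⟨u0, huv0⟩ := hiso v0
    have hAB : A.Nonempty ∧ B.Nonempty := by
      rcases hbip u0 v0 huv0 with ⟨h1, h2⟩ | ⟨h1, h2⟩
      exacts [⟨⟨u0, h1⟩, ⟨v0, h2⟩⟩, ⟨⟨v0, h2⟩, ⟨u0, h1⟩⟩]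
    have ha1 : (1 : ℝ) ≤ A.card := by exact_mod_cast hAB.1.card_pos
    have hb1 : (1 : ℝ) ≤ B.card := by exact_mod_cast hAB.2.card_pos
    have hab : (A.card : ℝ) ≤ B.card := by exact_mod_cast hcard
    have hnR : (n : ℝ) = A.card + B.card := by exact_mod_cast hn
    have hnpos : (0 : ℝ) < n := by nlinarith
    have hbpos : (0 : ℝ) < 4 * B.card := by linarith
    have hc : 1 / (4 * (1 - lam)) = (n : ℝ) / (4 * B.card) := by
      have h1 : 1 - lam = (B.card : ℝ) / n := by
        rw [hlam]
        field_simp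
        linarith
      have hb0 : (B.card : ℝ) ≠ 0 := by linarith
      have hn0 : (n : ℝ) ≠ 0 := ne_of_gt hnpos
      rw [h1]
      field_simp
    refine ⟨?_, ?_, ?_⟩
    · intro v
      rw [hp, hc]
      split_ifs with hvA
      · have h1 : (n : ℝ) / (4 * B.card) ≤ 3 / 4 := by
          rw [div_le_div_iff₀ hbpos (by norm_num)]
          nlinarith
        linarith
      · rw [div_le_div_iff₀ (by norm_num) hbpos]
        nlinarith
    · intro u v h
      rw [hp, hp]
      rcases hbip u v h with ⟨h1, h2⟩ | ⟨h1, h2⟩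
      · have h2' : v ∉ A := Finset.disjoint_right.mp hdisj h2
        simp only [h1, h2', if_true, if_false]
        linarith
      · have h1' : u ∉ A := Finset.disjoint_right.mp hdisj h1
        simp only [h1', h2, if_true, if_false]
        linarith
    · intro L hL
      set S := L ∩ A with hSdef
      set T := L ∩ B with hTdef
      have hSA : S ⊆ A := Finset.inter_subset_right
      have hNS := hws S hSA
      set NS := B.filter (fun b => ∃ a ∈ S, G.Adj a b) with hNSdef
      have hTm : T.card + NS.card ≤ B.card := by
        rw [← Finset.card_union_of_disjoint ?hd]
        · exact Finset.card_le_card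
            (Finset.union_subset Finset.inter_subset_right (Finset.filter_subset _ _))
        case hd =>
          rw [Finset.disjoint_left]
          intro x hx hx'
          obtain ⟨a, haS, hadj⟩ := (Finset.mem_filter.mp hx').2
          exact hL a (Finset.mem_inter.mp haS).1 x (Finset.mem_inter.mp hx).1 hadj
      have hsum : ∑ v ∈ L, p v =
          S.card * (1 - 1 / (4 * (1 - lam))) + T.card * (1 / (4 * (1 - lam))) := by
        simp only [hp]
        rw [Finset.sum_ite, Finset.sum_const, Finset.sum_const]
        have e1 : L.filter (fun v => v ∈ A) = S := Finset.filter_mem_eq_inter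
        have e2 : L.filter (fun v => v ∉ A) = T := by
          ext x
          simp only [Finset.mem_filter, hTdef, Finset.mem_inter]
          constructor
          · rintro ⟨hxL, hxA⟩
            refine ⟨hxL, ?_⟩
            have : x ∈ A ∪ B := by rw [hcover]; exact Finset.mem_univ x
            rcases Finset.mem_union.mp this with h | h
            · exact absurd h hxA
            · exact h
          · rintro ⟨hxL, hxB⟩
            exact ⟨hxL, Finset.disjoint_right.mp hdisj hxB⟩
        rw [e1, e2]
        simp [nsmul_eq_mul]
      rw [hsum, hc]
      have hSr : (S.card : ℝ) * B.card ≤ NS.card * A.card := by exact_mod_cast hNS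
      have hTr : (T.card : ℝ) + NS.card ≤ B.card := by exact_mod_cast hTm
      have hs0 : (0 : ℝ) ≤ S.card := Nat.cast_nonneg _
      have ht0 : (0 : ℝ) ≤ T.card := Nat.cast_nonneg _
      have hm0 : (0 : ℝ) ≤ NS.card := Nat.cast_nonneg _
      have ha0 : (0 : ℝ) ≤ A.card := by linarith
      have key2 : (A.card : ℝ) * (4 * B.card * S.card - S.card * (A.card + B.card)
          + T.card * (A.card + B.card)) ≤ A.card * (B.card * (A.card + B.card)) := by
        have H1 := mul_le_mul_of_nonneg_right hSr (by linarith : (0:ℝ) ≤ (A.card:ℝ) + B.card)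
        have H2 := mul_le_mul_of_nonneg_right hTr
          (by nlinarith : (0:ℝ) ≤ (A.card:ℝ) * ((A.card:ℝ) + B.card))
        have H3 := mul_nonneg hs0 (sq_nonneg ((A.card : ℝ) - B.card))
        nlinarith [H1, H2, H3]
      have key : 4 * (B.card : ℝ) * S.card - S.card * n + T.card * n ≤ B.card * n := by
        rw [hnR]
        have hapos : (0 : ℝ) < A.card := by linarith
        exact le_of_mul_le_mul_left key2 hapos
      clear_value S T NS
      clear hws hiso hbip hL hp hsum hNS hTm hSdef hTdef hNSdef
      set c : ℝ := (n : ℝ) / (4 * B.card) with hcdef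
      have hn' : (n : ℝ) = c * (4 * B.card) := by
        rw [hcdef, div_mul_cancel₀ _ (ne_of_gt hbpos)]
      clear hcdef
      clear_value c
      have key' := key
      rw [hn'] at key'
      have step : 4 * (B.card : ℝ) * ((S.card : ℝ) * (1 - c) + T.card * c)
          ≤ 4 * B.card * (c * B.card) := by linarith [key']
      have final : (S.card : ℝ) * (1 - c) + T.card * c ≤ c * B.card :=
        le_of_mul_le_mul_left step (by linarith : (0:ℝ) < 4 * B.card)
      have hnc : (n : ℝ) / 4 = c * B.card := by rw [hn']; ring
      rw [hnc]
      exact final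
end
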